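/- arXiv:2102.03838 — 7 statements merged into one kernel-verified Lean document; each statement's English description precedes it below -/
import Mathlib

section
/- A Banach space X is Grothendieck if and only if every bounded linear operator T : X → c₀ is weakly compact. -/
open Filter Topology ZeroAtInfty

/-- A sequence in the dual of `X` converges in the weak* topology. -/
def WeakStarConv (X : Type*) [SeminormedAddCommGroup X] [NormedSpace ℝ X]
    (f : ℕ → X →L[ℝ] ℝ) (g : X →L[ℝ] ℝ) : Prop :=
  ∀ x : X, Tendsto (fun n => f n x) atTop (𝓝 (g x))

/-- A sequence in a normed space `Z` converges in the weak topology. -/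
def WeakConv (Z : Type*) [SeminormedAddCommGroup Z] [NormedSpace ℝ Z]
    (f : ℕ → Z) (g : Z) : Prop :=
  ∀ φ : Z →L[ℝ] ℝ, Tendsto (fun n => φ (f n)) atTop (𝓝 (φ g))

/-- A Banach space is Grothendieck if weak*-convergent sequences in its dual converge weakly. -/
def IsGrothendieck (X : Type*) [SeminormedAddCommGroup X] [NormedSpace ℝ X] : Prop :=
  ∀ (f : ℕ → X →L[ℝ] ℝ) (g : X →L[ℝ] ℝ),
    WeakStarConv X f g → WeakConv (X →L[ℝ] ℝ) f g

/-- The weak topology of a normed space. -/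
def weakTopology (Y : Type*) [SeminormedAddCommGroup Y] [NormedSpace ℝ Y] :
    TopologicalSpace Y :=
  TopologicalSpace.induced (fun (y : Y) => fun f : Y →L[ℝ] ℝ => f y) Pi.topologicalSpace

/-- An operator is weakly compact if the image of the closed unit ball is
relatively compact in the weak topology. -/
def IsWeaklyCompactOp {X Y : Type*} [SeminormedAddCommGroup X] [NormedSpace ℝ X]
    [SeminormedAddCommGroup Y] [NormedSpace ℝ Y] (T : X →L[ℝ] Y) : Prop :=
  @IsCompact Y (weakTopology Y) (@closure Y (weakTopology Y) (⇑T '' Metric.closedBall 0 1))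

set_option maxHeartbeats 1000000

noncomputable section

abbrev c0 := C₀(ℕ, ℝ)

-- norm characterization
lemma c0_norm_le {f : c0} {c : ℝ} (hc : 0 ≤ c) : ‖f‖ ≤ c ↔ ∀ n, |f n| ≤ c := by
  rw [← ZeroAtInftyContinuousMap.norm_toBCF_eq_norm]
  rw [BoundedContinuousFunction.norm_le hc]
  exact Iff.rfl

lemma c0_tendsto (f : c0) : Tendsto (fun n => f n) atTop (𝓝 0) := by
  have := zero_at_infty f
  rwa [cocompact_eq_atTop] at this

-- evaluation functional
def ev (k : ℕ) : c0 →L[ℝ] ℝ :=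
  LinearMap.mkContinuous
    { toFun := fun f => f k
      map_add' := fun f g => rfl
      map_smul' := fun c f => rfl } 1
    (by intro f
        simp [Real.norm_eq_abs]
        have : ‖f‖ ≤ ‖f‖ := le_refl _
        exact (c0_norm_le (norm_nonneg f)).mp this k)

@[simp] lemma ev_apply (k : ℕ) (f : c0) : ev k f = f k := rfl

-- delta function
def delta (k : ℕ) : c0 :=
  ⟨⟨fun n => if n = k then (1:ℝ) else 0, continuous_of_discreteTopology⟩, by
    rw [cocompact_eq_atTop]
    refine tendsto_nhds_of_eventually_eq ?_
    filter_upwards [eventually_gt_atTop k] with n hn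
    simp [Nat.ne_of_gt hn]⟩

@[simp] lemma delta_apply (k n : ℕ) : delta k n = if n = k then (1:ℝ) else 0 := rfl

lemma finsum_coord (s : Finset ℕ) (c : ℕ → ℝ) (n : ℕ) :
    (∑ k ∈ s, c k • delta k) n = if n ∈ s then c n else 0 := by
  induction s using Finset.induction with
  | empty =>
    simp only [Finset.sum_empty, Finset.notMem_empty, if_false]
    rfl
  | insert k s h ih =>
    rw [Finset.sum_insert h]
    have : ((c k • delta k) + ∑ x ∈ s, c x • delta x) n
        = (c k • delta k) n + (∑ x ∈ s, c x • delta x) n := rfl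
    rw [this, ih]
    have hsm : (c k • delta k) n = c k * (delta k n) := rfl
    rw [hsm]
    by_cases hnk : n = k
    · subst hnk
      simp [h]
    · simp [hnk]

lemma abs_sum_le (φ : c0 →L[ℝ] ℝ) (s : Finset ℕ) :
    ∑ k ∈ s, |φ (delta k)| ≤ ‖φ‖ := by
  set w : c0 := ∑ k ∈ s, Real.sign (φ (delta k)) • delta k with hw
  have hwn : ‖w‖ ≤ 1 := by
    rw [c0_norm_le zero_le_one]
    intro n
    rw [hw, finsum_coord]
    by_cases hn : n ∈ s
    · simp only [hn, if_true]
      rcases Real.sign_apply_eq (φ (delta n)) with h | h | h <;> rw [h] <;> norm_num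
    · simp [hn]
  have hφw : φ w = ∑ k ∈ s, Real.sign (φ (delta k)) * φ (delta k) := by
    rw [hw, map_sum]
    congr 1; ext k
    rw [map_smul]; rfl
  have : φ w ≤ ‖φ‖ * ‖w‖ := le_trans (le_abs_self _) (φ.le_opNorm w)
  calc ∑ k ∈ s, |φ (delta k)| = φ w := by
        rw [hφw]
        refine Finset.sum_congr rfl fun k _ => ?_
        rcases lt_trichotomy (φ (delta k)) 0 with h | h | h
        · rw [Real.sign_of_neg h, abs_of_neg h]; ring
        · rw [h, Real.sign_zero, abs_zero, mul_zero]
        · rw [Real.sign_of_pos h, abs_of_pos h, one_mul]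
    _ ≤ ‖φ‖ * ‖w‖ := this
    _ ≤ ‖φ‖ * 1 := by
        exact mul_le_mul_of_nonneg_left hwn (norm_nonneg φ)
    _ = ‖φ‖ := mul_one _

lemma summable_abs_coeff (φ : c0 →L[ℝ] ℝ) : Summable (fun k => |φ (delta k)|) :=
  summable_of_sum_range_le (fun k => abs_nonneg _) (fun n => abs_sum_le φ (Finset.range n))


lemma partial_tendsto (z : c0) :
    Tendsto (fun N => ∑ k ∈ Finset.range N, z k • delta k) atTop (𝓝 z) := by
  rw [Metric.tendsto_atTop]
  intro ε hε
  obtain ⟨N₀, hN₀⟩ := (Metric.tendsto_atTop.mp (c0_tendsto z)) (ε/2) (half_pos hε)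
  refine ⟨N₀, fun N hN => ?_⟩
  rw [dist_eq_norm]
  have : ‖(∑ k ∈ Finset.range N, z k • delta k) - z‖ ≤ ε/2 := by
    rw [c0_norm_le (le_of_lt (half_pos hε))]
    intro n
    have hcoord : ((∑ k ∈ Finset.range N, z k • delta k) - z) n
        = (∑ k ∈ Finset.range N, z k • delta k) n - z n := rfl
    rw [hcoord, finsum_coord]
    by_cases hn : n ∈ Finset.range N
    · simp [hn]; positivity
    · simp only [hn, if_false, zero_sub, abs_neg]
      have : n ≥ N₀ := le_trans hN (le_of_not_gt (by simpa [Finset.mem_range] using hn))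
      have := hN₀ n this
      rw [Real.dist_eq, sub_zero] at this
      exact le_of_lt this
  linarith [this]

lemma repr_hasSum (φ : c0 →L[ℝ] ℝ) (z : c0) :
    HasSum (fun k => φ (delta k) * z k) (φ z) := by
  have hsum : Summable (fun k => φ (delta k) * z k) := by
    refine Summable.of_abs ?_
    refine Summable.of_nonneg_of_le (fun k => abs_nonneg _) (fun k => ?_)
      ((summable_abs_coeff φ).mul_right ‖z‖)
    rw [abs_mul]
    exact mul_le_mul_of_nonneg_left
      ((c0_norm_le (norm_nonneg z)).mp le_rfl k) (abs_nonneg _)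
  have h1 := hsum.hasSum
  have h2 := h1.tendsto_sum_nat
  have h3 : Tendsto (fun N => φ (∑ k ∈ Finset.range N, z k • delta k)) atTop
      (𝓝 (φ z)) := (φ.continuous.tendsto z).comp (partial_tendsto z)
  have heq : (fun N => φ (∑ k ∈ Finset.range N, z k • delta k))
      = fun N => ∑ k ∈ Finset.range N, φ (delta k) * z k := by
    ext N
    rw [map_sum]
    exact Finset.sum_congr rfl fun k _ => by rw [map_smul]; simp [mul_comm]
  rw [heq] at h3
  have := tendsto_nhds_unique h2 h3
  rwa [this] at h1

def jmap : c0 → (ℕ → ℝ) := fun z k => z k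

lemma jmap_cont : @Continuous c0 (ℕ → ℝ) (weakTopology c0) _ jmap := by
  have h1 : @Continuous c0 ((c0 →L[ℝ] ℝ) → ℝ) (weakTopology c0) _
      (fun y => fun f : c0 →L[ℝ] ℝ => f y) := continuous_induced_dom
  have : jmap = (fun v : (c0 →L[ℝ] ℝ) → ℝ => fun k => v (ev k)) ∘
      (fun y => fun f : c0 →L[ℝ] ℝ => f y) := by
    ext z k; simp [jmap]
  rw [this]
  exact @Continuous.comp c0 ((c0 →L[ℝ] ℝ) → ℝ) (ℕ → ℝ) (weakTopology c0) _ _ _ _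
    (continuous_pi fun k => continuous_apply (ev k)) h1

lemma tail_bound {a : ℕ → ℝ} (ha : Summable (fun k => |a k|)) :
    Tendsto (fun N => ∑' k, |a (k + N)|) atTop (𝓝 0) := by
  have h := ha.hasSum.tendsto_sum_nat
  have : ∀ N, ∑' k, |a (k + N)| = (∑' k, |a k|) - ∑ k ∈ Finset.range N, |a k| := by
    intro N
    have := Summable.sum_add_tsum_nat_add N ha
    linarith [this]
  simp_rw [this]
  have := h.const_sub (∑' k, |a k|)
  simpa using this

lemma tsum_cont_on {a : ℕ → ℝ} (ha : Summable (fun k => |a k|)) {M : ℝ}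
    {P : Set (ℕ → ℝ)} (hb : ∀ y ∈ P, ∀ k, |y k| ≤ M) :
    Continuous (fun y : P => ∑' k, a k * (y : ℕ → ℝ) k) := by
  have hsummable : ∀ v : ℕ → ℝ, v ∈ P → Summable (fun k => a k * v k) := by
    intro v hv
    refine Summable.of_abs (Summable.of_nonneg_of_le (fun k => abs_nonneg _)
      (fun k => ?_) (ha.mul_right M))
    rw [abs_mul]
    exact mul_le_mul_of_nonneg_left (hb v hv k) (abs_nonneg _)
  rcases isEmpty_or_nonempty P with h | ⟨⟨y₀, hy₀⟩⟩
  · exact continuous_of_const (fun x => (h.elim x))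
  have hM : 0 ≤ M := le_trans (abs_nonneg _) (hb y₀ hy₀ 0)
  have hF : ∀ N : ℕ, Continuous (fun y : P => ∑ k ∈ Finset.range N, a k * (y : ℕ → ℝ) k) := by
    intro N
    refine continuous_finset_sum _ fun k _ => ?_
    exact continuous_const.mul ((continuous_apply k).comp continuous_subtype_val)
  refine TendstoUniformly.continuous
    (F := fun N (y : P) => ∑ k ∈ Finset.range N, a k * (y : ℕ → ℝ) k) (p := atTop)
    ?_ (Frequently.of_forall hF)
  rw [Metric.tendstoUniformly_iff]
  intro ε hε
  have hεM : 0 < ε / (M + 1) := div_pos hε (by linarith)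
  filter_upwards [(tail_bound ha).eventually (gt_mem_nhds hεM)] with N hN y
  obtain ⟨v, hvP⟩ := y
  have hsy : Summable (fun k => a k * v k) := hsummable v hvP
  have key : (∑' k, a k * v k) - ∑ k ∈ Finset.range N, a k * v k
      = ∑' k, a (k + N) * v (k + N) := by
    have := Summable.sum_add_tsum_nat_add N hsy
    linarith [this]
  have hcoe : dist (∑' k, a k * v k) (∑ k ∈ Finset.range N, a k * v k)
      = |∑' k, a (k + N) * v (k + N)| := by rw [Real.dist_eq, key]
  show dist _ _ < ε
  rw [hcoe]
  have hsummtail : Summable (fun k => |a (k + N) * v (k + N)|) :=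
    (summable_nat_add_iff N).mpr hsy.abs
  calc |∑' k, a (k + N) * v (k + N)|
      ≤ ∑' k, |a (k + N) * v (k + N)| := by
        simpa only [Real.norm_eq_abs] using
          norm_tsum_le_tsum_norm (f := fun k => a (k + N) * v (k + N))
            (by simpa only [Real.norm_eq_abs] using hsummtail)
    _ ≤ ∑' k, |a (k + N)| * M := by
        refine Summable.tsum_le_tsum (fun k => ?_) hsummtail
          (((summable_nat_add_iff N).mpr ha).mul_right M)
        rw [abs_mul]
        exact mul_le_mul_of_nonneg_left (hb v hvP _) (abs_nonneg _)
    _ = (∑' k, |a (k + N)|) * M := tsum_mul_right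
    _ < ε := by
        have h0 : (0:ℝ) ≤ ∑' k, |a (k + N)| := tsum_nonneg fun k => abs_nonneg _
        have h1 : (∑' k, |a (k + N)|) * M ≤ (ε / (M+1)) * M := by nlinarith [hN]
        have h2 : (ε / (M+1)) * M < ε := by
          rw [div_mul_eq_mul_div, div_lt_iff₀ (by linarith : (0:ℝ) < M + 1)]
          nlinarith
        linarith

/-- build element of c0 from a vanishing sequence -/
def mkc0 (v : ℕ → ℝ) (hv : Tendsto v atTop (𝓝 0)) : c0 :=
  ⟨⟨v, continuous_of_discreteTopology⟩, by rwa [cocompact_eq_atTop]⟩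

@[simp] lemma mkc0_apply (v : ℕ → ℝ) (hv) (n : ℕ) : mkc0 v hv n = v n := rfl

lemma weak_compact_of_pi {M : ℝ} {P : Set (ℕ → ℝ)} (hP : IsCompact P)
    (hb : ∀ y ∈ P, ∀ k, |y k| ≤ M)
    (hz : ∀ y ∈ P, Tendsto y atTop (𝓝 0)) :
    @IsCompact c0 (weakTopology c0) (jmap ⁻¹' P) := by
  haveI : CompactSpace P := isCompact_iff_compactSpace.mp hP
  set g : P → c0 := fun y => mkc0 (y : ℕ → ℝ) (hz y y.2) with hg
  have hgc : @Continuous P c0 _ (weakTopology c0) g := by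
    rw [weakTopology, continuous_induced_rng]
    refine continuous_pi fun φ => ?_
    have heq : (fun (y : P) => ((fun (z : c0) => fun f : c0 →L[ℝ] ℝ => f z) ∘ g) y φ)
        = fun y : P => ∑' k, φ (delta k) * (y : ℕ → ℝ) k := by
      funext y
      exact ((repr_hasSum φ (g y)).tsum_eq).symm
    show Continuous fun (y : P) => ((fun (z : c0) => fun f : c0 →L[ℝ] ℝ => f z) ∘ g) y φ
    rw [heq]
    exact tsum_cont_on (summable_abs_coeff φ) hb
  have hrange : jmap ⁻¹' P = Set.range g := by
    ext z
    constructor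
    · intro hzP
      refine ⟨⟨jmap z, hzP⟩, ?_⟩
      apply ZeroAtInftyContinuousMap.ext
      intro n
      rfl
    · rintro ⟨y, rfl⟩
      show jmap (g y) ∈ P
      have : jmap (g y) = (y : ℕ → ℝ) := rfl
      rw [this]; exact y.2
  rw [hrange]
  exact @isCompact_range P c0 _ (weakTopology c0) _ g hgc

theorem forward_dir {X : Type*} [NormedAddCommGroup X] [NormedSpace ℝ X] [CompleteSpace X]
    (hG : IsGrothendieck X) (T : X →L[ℝ] c0) : IsWeaklyCompactOp T := by
  classical
  set A : Set c0 := ⇑T '' Metric.closedBall 0 1 with hA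
  set m : X → (ℕ → ℝ) := fun x => jmap (T x) with hm
  set S : Set (ℕ → ℝ) := m '' Metric.closedBall 0 1 with hS
  set P : Set (ℕ → ℝ) := closure S with hP
  -- bound on S and P
  have hbS : ∀ y ∈ S, ∀ k, |y k| ≤ ‖T‖ := by
    rintro y ⟨x, hx, rfl⟩ k
    have h1 : |(T x) k| ≤ ‖T x‖ := by
      have := (ZeroAtInftyContinuousMap.norm_toBCF_eq_norm (f := T x)).symm ▸
        ((T x).toBCF.norm_coe_le_norm k)
      simpa [Real.norm_eq_abs] using this
    refine h1.trans (le_trans (T.le_opNorm x) ?_)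
    have hx1 : ‖x‖ ≤ 1 := by simpa [Metric.mem_closedBall, dist_eq_norm] using hx
    nlinarith [norm_nonneg (T : X →L[ℝ] c0), norm_nonneg x]
  have hclosedbox : IsClosed {y : ℕ → ℝ | ∀ k, |y k| ≤ ‖T‖} := by
    have : {y : ℕ → ℝ | ∀ k, |y k| ≤ ‖T‖} = ⋂ k, (fun y : ℕ → ℝ => y k) ⁻¹' (Set.Icc (-‖T‖) ‖T‖) := by
      ext y; simp [abs_le, Set.mem_iInter]
    rw [this]
    exact isClosed_iInter fun k => (isClosed_Icc).preimage (continuous_apply k)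
  have hbP : ∀ y ∈ P, ∀ k, |y k| ≤ ‖T‖ :=
    closure_minimal hbS hclosedbox
  have hbox : IsCompact (Set.pi Set.univ fun _ : ℕ => Set.Icc (-‖T‖) ‖T‖) :=
    isCompact_univ_pi fun _ => isCompact_Icc
  have hPc : IsCompact P := by
    refine hbox.of_isClosed_subset isClosed_closure ?_
    intro y hy
    rw [Set.mem_univ_pi]
    intro k
    exact abs_le.mp (hbP y hy k)
  -- every element of P vanishes at infinity
  have hz : ∀ y ∈ P, Tendsto y atTop (𝓝 0) := by
    intro y hy
    obtain ⟨U, hSU, hUy⟩ := mem_closure_iff_ultrafilter.mp hy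
    -- section of m
    set gsec : (ℕ → ℝ) → X := fun w => if h : w ∈ S then h.choose else 0 with hgsec
    set V : Ultrafilter X := U.map gsec with hV
    have hcong : (m ∘ gsec) =ᶠ[(U : Filter (ℕ → ℝ))] id := by
      filter_upwards [hSU] with w hw
      have := hw.choose_spec.2
      simp only [Function.comp, hgsec, dif_pos hw, id]
      exact this
    have h1 : Filter.map m (V : Filter X) = (U : Filter (ℕ → ℝ)) := by
      show Filter.map m (Filter.map gsec (U : Filter (ℕ → ℝ))) = (U : Filter (ℕ → ℝ))
      rw [Filter.map_map, Filter.map_congr hcong, Filter.map_id]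
    have h2 : Tendsto m (V : Filter X) (𝓝 y) := by
      rw [Tendsto, h1]; exact hUy
    have hk : ∀ k, Tendsto (fun x => m x k) (V : Filter X) (𝓝 (y k)) :=
      fun k => ((continuous_apply k).tendsto y).comp h2
    -- embed into bidual with weak* topology
    set ι : X → WeakDual ℝ (X →L[ℝ] ℝ) :=
      fun x => StrongDual.toWeakDual (NormedSpace.inclusionInDoubleDual ℝ X x) with hι
    set K : Set (WeakDual ℝ (X →L[ℝ] ℝ)) :=
      WeakDual.toStrongDual ⁻¹' Metric.closedBall 0 1 with hK
    have hKc : IsCompact K := WeakDual.isCompact_closedBall (𝕜 := ℝ) (E := X →L[ℝ] ℝ) 0 1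
    have hKV : K ∈ Ultrafilter.map ι V := by
      have hball : Metric.closedBall (0 : X) 1 ∈ (V : Filter X) := by
        rw [hV, Ultrafilter.coe_map]
        refine Filter.mem_map.mpr (Filter.mem_of_superset hSU ?_)
        intro w hw
        show gsec w ∈ Metric.closedBall 0 1
        rw [hgsec]
        simp only [dif_pos hw]
        exact hw.choose_spec.1
      rw [Ultrafilter.mem_map]
      refine Filter.mem_of_superset hball ?_
      intro x hx
      show ι x ∈ K
      rw [hK]
      simp only [Set.mem_preimage, Metric.mem_closedBall, dist_zero_right]
      have h4 : ‖NormedSpace.inclusionInDoubleDual ℝ X x‖ ≤ ‖x‖ :=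
        NormedSpace.double_dual_bound ℝ X x
      have hx1 : ‖x‖ ≤ 1 := by simpa [Metric.mem_closedBall, dist_eq_norm] using hx
      exact (dist_zero_right (NormedSpace.inclusionInDoubleDual ℝ X x)).le.trans (le_trans h4 hx1)
    obtain ⟨φ, hφK, hφ⟩ := hKc.ultrafilter_le_nhds (Ultrafilter.map ι V)
      (le_principal_iff.mpr hKV)
    have hfk : ∀ k, y k = φ ((ev k).comp T) := by
      intro k
      have h5 : Tendsto ι (V : Filter X) (𝓝 φ) := hφ
      have h6 : Tendsto (fun x => (ι x) ((ev k).comp T)) (V : Filter X)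
          (𝓝 (φ ((ev k).comp T))) :=
        ((WeakDual.eval_continuous ((ev k).comp T)).tendsto φ).comp h5
      have h7 : (fun x => (ι x) ((ev k).comp T)) = fun x => m x k := by
        funext x
        show StrongDual.toWeakDual ((NormedSpace.inclusionInDoubleDual ℝ X) x) ((ev k).comp T) = _
        rw [StrongDual.coe_toWeakDual, NormedSpace.dual_def]
        show ((ev k).comp T) x = (T x) k
        rw [ContinuousLinearMap.comp_apply, ev_apply]
      rw [h7] at h6
      exact tendsto_nhds_unique (hk k) h6
    -- Grothendieck property
    have hwsc : WeakStarConv X (fun k => (ev k).comp T) 0 := by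
      intro x
      have := c0_tendsto (T x)
      simpa using this
    have hwc := hG (fun k => (ev k).comp T) 0 hwsc (WeakDual.toStrongDual φ)
    have h8 : (fun k => (WeakDual.toStrongDual φ) ((ev k).comp T)) = y := by
      funext k
      exact (hfk k).symm
    rw [h8] at hwc
    simpa using hwc
  -- conclude
  have hAP : A ⊆ jmap ⁻¹' P := by
    rintro z ⟨x, hx, rfl⟩
    exact subset_closure ⟨x, hx, rfl⟩
  have hclosedpre : @IsClosed c0 (weakTopology c0) (jmap ⁻¹' P) :=
    @IsClosed.preimage c0 (ℕ → ℝ) (weakTopology c0) _ jmap jmap_cont P isClosed_closure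
  have hc1 : @IsClosed c0 (weakTopology c0) (@closure c0 (weakTopology c0) A) :=
    @isClosed_closure c0 (weakTopology c0) A
  have hc2 : @closure c0 (weakTopology c0) A ⊆ jmap ⁻¹' P :=
    @closure_minimal c0 (weakTopology c0) A _ hAP hclosedpre
  exact @IsCompact.of_isClosed_subset c0 (weakTopology c0) _ _
    (weak_compact_of_pi hPc hbP hz) hc1 hc2

lemma helly {X : Type*} [NormedAddCommGroup X] [NormedSpace ℝ X]
    (φ : (X →L[ℝ] ℝ) →L[ℝ] ℝ) (hφ : ‖φ‖ ≤ 1) (s : Finset ℕ) (g : ℕ → X →L[ℝ] ℝ)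
    {ε : ℝ} (hε : 0 < ε) :
    ∃ x ∈ Metric.closedBall (0:X) 1, ∀ i ∈ s, |g i x - φ (g i)| < ε := by
  classical
  set E := (↥s → ℝ)
  set L : X →ₗ[ℝ] E := LinearMap.pi (fun i : ↥s => (g ↑i).toLinearMap) with hL
  set C : Set E := L '' Metric.closedBall 0 1 with hC
  have hCconv : Convex ℝ C := (convex_closedBall (0:X) 1).linear_image L
  set p : E := fun i => φ (g ↑i) with hp
  have hpc : p ∈ closure C := by
    by_contra hnot
    obtain ⟨f, u, hfu, hup⟩ :=
      geometric_hahn_banach_closed_point hCconv.closure isClosed_closure hnot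
    set c : ↥s → ℝ := fun i => f (fun j => if i = j then (1:ℝ) else 0) with hc
    have hf : ∀ v : E, f v = ∑ i, v i * c i := by
      intro v
      conv_lhs => rw [pi_eq_sum_univ v]
      rw [map_sum]
      refine Finset.sum_congr rfl fun i _ => ?_
      rw [map_smul]
      rfl
    set hfun : X →L[ℝ] ℝ := ∑ i, c i • g ↑i with hhfun
    have key1 : ∀ x : X, f (L x) = hfun x := by
      intro x
      rw [hf]
      rw [hhfun]
      have : (∑ i : ↥s, c i • g ↑i) x = ∑ i : ↥s, c i * g ↑i x := by
        rw [ContinuousLinearMap.sum_apply]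
        exact Finset.sum_congr rfl fun i _ => rfl
      rw [this]
      exact Finset.sum_congr rfl fun i _ => by
        show (L x) i * c i = c i * (g ↑i) x
        have : (L x) i = (g ↑i) x := rfl
        rw [this, mul_comm]
    have key2 : f p = φ hfun := by
      rw [hf, hhfun, map_sum]
      refine Finset.sum_congr rfl fun i _ => ?_
      rw [map_smul]
      show p i * c i = c i * φ (g ↑i)
      rw [hp, mul_comm]
    have key3 : ∀ x ∈ Metric.closedBall (0:X) 1, hfun x < u := by
      intro x hx
      rw [← key1]
      exact hfu (L x) (subset_closure ⟨x, hx, rfl⟩)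
    have hu0 : 0 < u := by
      have := key3 0 (Metric.mem_closedBall_self zero_le_one)
      simpa using this
    have habs : ∀ x ∈ Metric.closedBall (0:X) 1, |hfun x| ≤ u := by
      intro x hx
      have h1 := key3 x hx
      have hnx : -x ∈ Metric.closedBall (0:X) 1 := by
        simpa [Metric.mem_closedBall, dist_eq_norm] using
          (by simpa [Metric.mem_closedBall, dist_eq_norm] using hx : ‖x‖ ≤ 1)
      have h2 := key3 (-x) hnx
      rw [map_neg] at h2
      rw [abs_le]
      constructor <;> linarith
    have hnorm : ‖hfun‖ ≤ u := by
      refine ContinuousLinearMap.opNorm_le_bound hfun (le_of_lt hu0) fun x => ?_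
      rcases eq_or_ne x 0 with rfl | hx0
      · simp
      · have hxpos : 0 < ‖x‖ := norm_pos_iff.mpr hx0
        set w := ‖x‖⁻¹ • x with hw
        have hwball : w ∈ Metric.closedBall (0:X) 1 := by
          simp only [Metric.mem_closedBall, dist_zero_right, hw, norm_smul,
            norm_inv, norm_norm]
          rw [inv_mul_cancel₀ (ne_of_gt hxpos)]
        have := habs w hwball
        have hhx : hfun x = ‖x‖ * hfun w := by
          rw [hw, map_smul]
          simp
          field_simp
        rw [Real.norm_eq_abs, hhx, abs_mul, abs_of_pos hxpos, mul_comm u ‖x‖]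
        exact mul_le_mul_of_nonneg_left (by simpa using this) (le_of_lt hxpos)
    have hcontr : f p ≤ u := by
      rw [key2]
      calc φ hfun ≤ |φ hfun| := le_abs_self _
        _ ≤ ‖φ‖ * ‖hfun‖ := by
            simpa [Real.norm_eq_abs] using φ.le_opNorm hfun
        _ ≤ 1 * u := mul_le_mul hφ hnorm (norm_nonneg _) zero_le_one
        _ = u := one_mul u
    linarith
  obtain ⟨b, hbC, hdist⟩ := Metric.mem_closure_iff.mp hpc ε hε
  obtain ⟨x, hx, rfl⟩ := hbC
  refine ⟨x, hx, fun i hi => ?_⟩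
  have h1 : dist (p ⟨i, hi⟩) ((L x) ⟨i, hi⟩) ≤ dist p (L x) := dist_le_pi_dist p (L x) ⟨i, hi⟩
  have h2 : dist (p ⟨i, hi⟩) ((L x) ⟨i, hi⟩) = |g i x - φ (g i)| := by
    rw [Real.dist_eq]
    have e1 : p ⟨i, hi⟩ = φ (g i) := rfl
    have e2 : (L x) ⟨i, hi⟩ = g i x := rfl
    rw [e1, e2, abs_sub_comm]
  rw [← h2]
  exact lt_of_le_of_lt h1 hdist

theorem reverse_dir {X : Type*} [NormedAddCommGroup X] [NormedSpace ℝ X] [CompleteSpace X]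
    (hT : ∀ T : X →L[ℝ] c0, IsWeaklyCompactOp T) : IsGrothendieck X := by
  classical
  intro f g hws
  set h : ℕ → X →L[ℝ] ℝ := fun n => f n - g with hh
  have hws0 : ∀ x, Tendsto (fun n => h n x) atTop (𝓝 0) := by
    intro x
    have h1 := (hws x).sub (tendsto_const_nhds (x := g x))
    simpa [hh] using h1
  have hbdd : ∀ x, ∃ C, ∀ n, ‖h n x‖ ≤ C := by
    intro x
    have t : Tendsto (fun n => ‖h n x‖) atTop (𝓝 0) := by
      simpa using (hws0 x).norm
    obtain ⟨N, hN⟩ := Filter.eventually_atTop.mp (t.eventually_lt_const one_pos)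
    refine ⟨max 1 ((Finset.range (N+1)).sup' (by simp) fun n => ‖h n x‖), fun n => ?_⟩
    rcases le_or_gt n N with hn | hn
    · refine le_max_of_le_right ?_
      exact Finset.le_sup' (f := fun n => ‖h n x‖) (Finset.mem_range.mpr (Nat.lt_succ_of_le hn))
    · exact le_max_of_le_left (le_of_lt (hN n (le_of_lt hn)))
  obtain ⟨M, hM⟩ := banach_steinhaus hbdd
  have hM0 : 0 ≤ M := le_trans (norm_nonneg (h 0)) (hM 0)
  -- the operator T
  set T : X →L[ℝ] c0 := LinearMap.mkContinuous
    { toFun := fun x => mkc0 (fun n => h n x) (hws0 x)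
      map_add' := fun x y => by
        apply ZeroAtInftyContinuousMap.ext
        intro n
        show h n (x + y) = h n x + h n y
        exact map_add (h n) x y
      map_smul' := fun c x => by
        apply ZeroAtInftyContinuousMap.ext
        intro n
        show h n (c • x) = c • (h n x)
        exact map_smul (h n) c x } M
    (fun x => by
      show ‖mkc0 (fun n => h n x) (hws0 x)‖ ≤ M * ‖x‖
      rw [c0_norm_le (by positivity)]
      intro n
      show |h n x| ≤ M * ‖x‖
      calc |h n x| ≤ ‖h n‖ * ‖x‖ := by
            simpa [Real.norm_eq_abs] using (h n).le_opNorm x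
        _ ≤ M * ‖x‖ := mul_le_mul_of_nonneg_right (hM n) (norm_nonneg x)) with hTdef
  have hTapp : ∀ x n, (T x) n = h n x := fun x n => rfl
  have hwc := hT T
  set A : Set c0 := ⇑T '' Metric.closedBall 0 1 with hA
  set Kw : Set c0 := @closure c0 (weakTopology c0) A with hKw
  have hjK : IsCompact (jmap '' Kw) :=
    @IsCompact.image c0 (ℕ → ℝ) (weakTopology c0) _ Kw jmap hwc jmap_cont
  have hjKcl : IsClosed (jmap '' Kw) := hjK.isClosed
  have main : ∀ φ : (X →L[ℝ] ℝ) →L[ℝ] ℝ, ‖φ‖ ≤ 1 →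
      Tendsto (fun n => φ (h n)) atTop (𝓝 0) := by
    intro φ hφ
    set y : ℕ → ℝ := fun n => φ (h n) with hy
    have hyc : y ∈ closure (jmap '' A) := by
      rw [mem_closure_iff]
      intro o ho hyo
      obtain ⟨I, u, hu, hsub⟩ := isOpen_pi_iff.mp ho y hyo
      have hδ : ∀ i ∈ I, ∃ δ > 0, Metric.ball (y i) δ ⊆ u i := fun i hi =>
        Metric.isOpen_iff.mp (hu i hi).1 (y i) (hu i hi).2
      choose δ hδpos hδsub using hδ
      set δ' : ℕ → ℝ := fun i => if hi : i ∈ I then δ i hi else 1 with hδ'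
      rcases I.eq_empty_or_nonempty with rfl | hne
      · refine ⟨jmap (T 0), hsub ?_, ⟨T 0, ⟨0, Metric.mem_closedBall_self zero_le_one, rfl⟩, rfl⟩⟩
        simp [Set.mem_pi]
      · set ε := I.inf' hne δ' with hε
        have hεpos : 0 < ε := by
          rw [hε, Finset.lt_inf'_iff]
          intro i hi
          show (0:ℝ) < if hi' : i ∈ I then δ i hi' else 1
          rw [dif_pos hi]
          exact hδpos i hi
        obtain ⟨x, hx, hclose⟩ := helly φ hφ I h hεpos
        refine ⟨jmap (T x), hsub ?_, ⟨T x, ⟨x, hx, rfl⟩, rfl⟩⟩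
        rw [Set.mem_pi]
        intro i hi
        have hi' : i ∈ I := hi
        refine hδsub i hi' ?_
        rw [Metric.mem_ball, Real.dist_eq]
        have e1 : jmap (T x) i = h i x := rfl
        rw [e1]
        have hεle : ε ≤ δ i hi' :=
          le_of_le_of_eq (Finset.inf'_le δ' hi') (dif_pos hi')
        calc |h i x - y i| = |h i x - φ (h i)| := rfl
          _ < ε := hclose i hi'
          _ ≤ δ i hi' := hεle
    have hsubset : closure (jmap '' A) ⊆ jmap '' Kw := by
      refine closure_minimal (Set.image_mono ?_) hjKcl
      exact @subset_closure c0 (weakTopology c0) A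
    obtain ⟨z, hzK, hzy⟩ := hsubset hyc
    show Tendsto y atTop (𝓝 0)
    rw [← hzy]
    exact c0_tendsto z
  -- conclude WeakConv
  intro φ
  set c := max ‖φ‖ 1 with hc
  have hc1 : 0 < c := lt_of_lt_of_le one_pos (le_max_right _ _)
  have hφc : ‖c⁻¹ • φ‖ ≤ 1 := by
    rw [norm_smul c⁻¹ φ, norm_inv, Real.norm_eq_abs, abs_of_pos hc1]
    rw [inv_mul_le_iff₀ hc1, mul_one]
    exact le_max_left _ _
  have h0 := main (c⁻¹ • φ) hφc
  have h1 : Tendsto (fun n => φ (h n)) atTop (𝓝 0) := by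
    have h2 := h0.const_mul c
    have h3 : (fun n => c * ((c⁻¹ • φ) (h n))) = fun n => φ (h n) := by
      funext n
      rw [ContinuousLinearMap.smul_apply, smul_eq_mul, ← mul_assoc,
        mul_inv_cancel₀ (ne_of_gt hc1), one_mul]
    rw [h3] at h2
    simpa using h2
  have h4 := h1.add (tendsto_const_nhds (x := φ g))
  rw [zero_add] at h4
  have h5 : (fun n => φ (h n) + φ g) = fun n => φ (f n) := by
    funext n
    rw [hh]
    show φ (f n - g) + φ g = φ (f n)
    rw [map_sub]
    ring
  rwa [h5] at h4


/-- `X` is Grothendieck iff every operator `X → c₀` is weakly compact. -/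
theorem grothendieck_iff_weaklyCompact_to_c0 (X : Type*)
    [NormedAddCommGroup X] [NormedSpace ℝ X] [CompleteSpace X] :
    IsGrothendieck X ↔ ∀ T : X →L[ℝ] C₀(ℕ, ℝ), IsWeaklyCompactOp T := by
  constructor
  · intro hG T
    exact forward_dir hG T
  · intro hT
    exact reverse_dir hT

end
end

section
/- A Grothendieck Banach space whose dual unit ball is weak*-sequentially compact is reflexive. -/
open Filter Topology ZeroAtInfty

section DDInst
open Filter Topology Metric Set NormedSpace
set_option synthInstance.maxHeartbeats 400000
set_option maxHeartbeats 1000000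

lemma aux_quot_norm_ge {E : Type*} [NormedAddCommGroup E] [NormedSpace ℝ E]
    (S : Submodule ℝ E) (x : E) {c : ℝ} (h : ∀ m ∈ S, c ≤ ‖x - m‖) :
    c ≤ ‖(Submodule.Quotient.mk x : E ⧸ S)‖ := by
  have hn : ‖(Submodule.Quotient.mk x : E ⧸ S)‖ = infDist x (S : Set E) :=
    QuotientAddGroup.norm_mk x
  rw [hn]
  by_contra hc
  push_neg at hc
  obtain ⟨y, hy, hd⟩ := (infDist_lt_iff ⟨0, S.zero_mem⟩).mp hc
  rw [dist_eq_norm] at hd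
  exact absurd (h y hy) (by linarith)

noncomputable def quotCLM {E : Type*} [NormedAddCommGroup E] [NormedSpace ℝ E]
    (S : Submodule ℝ E) : E →L[ℝ] (E ⧸ S) :=
  LinearMap.mkContinuous S.mkQ 1 (fun m => by
    simpa using Submodule.Quotient.norm_mk_le S m)

lemma quotCLM_apply {E : Type*} [NormedAddCommGroup E] [NormedSpace ℝ E]
    (S : Submodule ℝ E) (x : E) : quotCLM S x = Submodule.Quotient.mk x := rfl

lemma quotCLM_norm_le {E : Type*} [NormedAddCommGroup E] [NormedSpace ℝ E]
    (S : Submodule ℝ E) : ‖quotCLM S‖ ≤ 1 :=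
  LinearMap.mkContinuous_norm_le _ zero_le_one _

/-- A functional vanishing on a closed submodule, with prescribed value at a distant point. -/
lemma aux_sep2 {E : Type*} [NormedAddCommGroup E] [NormedSpace ℝ E]
    (S : Submodule ℝ E) (hS : IsClosed (S : Set E)) (x : E) {c θ : ℝ} (hc : 0 < c)
    (hθ : 0 < θ) (hd : ∀ m ∈ S, c ≤ ‖x - m‖) :
    ∃ Φ : E →L[ℝ] ℝ, ‖Φ‖ ≤ θ / c ∧ (∀ s ∈ S, Φ s = 0) ∧ Φ x = θ := by
  haveI := hS
  have hQF := aux_quot_norm_ge S x hd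
  have hQF0 : (Submodule.Quotient.mk x : E ⧸ S) ≠ 0 := by
    intro h; rw [h, norm_zero] at hQF; linarith
  obtain ⟨g, hg1, hgx⟩ := exists_dual_vector ℝ _ (norm_ne_zero_iff.mpr hQF0)
  set N : ℝ := ‖(Submodule.Quotient.mk x : E ⧸ S)‖ with hN
  have hN0 : (0:ℝ) < N := lt_of_lt_of_le hc hQF
  refine ⟨(θ / N) • (g.comp (quotCLM S)), ?_, ?_, ?_⟩
  · calc ‖(θ / N) • (g.comp (quotCLM S))‖ ≤ |θ / N| * ‖g.comp (quotCLM S)‖ := by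
          simpa [Real.norm_eq_abs, abs_div] using _root_.norm_smul_le (θ / N) (g.comp (quotCLM S))
      _ ≤ (θ / N) * 1 := by
          apply mul_le_mul (le_of_eq (abs_of_pos (by positivity))) ?_ (norm_nonneg _)
            (by positivity)
          calc ‖g.comp (quotCLM S)‖ ≤ ‖g‖ * ‖quotCLM S‖ := g.opNorm_comp_le _
            _ ≤ 1 := by rw [hg1]; simpa using quotCLM_norm_le S
      _ ≤ θ / c := by
          rw [mul_one]
          gcongr
  · intro s hs
    have h0 : quotCLM S s = 0 := by
      rw [quotCLM_apply, Submodule.Quotient.mk_eq_zero]; exact hs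
    simp [ContinuousLinearMap.comp_apply, h0]
  · have h1 : quotCLM S x = Submodule.Quotient.mk x := quotCLM_apply S x
    simp only [ContinuousLinearMap.smul_apply, ContinuousLinearMap.comp_apply, h1, hgx]
    simp only [smul_eq_mul]
    simp only [RCLike.ofReal_real_eq_id, id]
    field_simp
/-- Separating functional for a closed submodule and a point outside it. -/
lemma aux_sep {E : Type*} [NormedAddCommGroup E] [NormedSpace ℝ E]
    (S : Submodule ℝ E) (hS : IsClosed (S : Set E)) (x : E) (hx : x ∉ S) :
    ∃ h : E →L[ℝ] ℝ, ‖h‖ ≤ 1 ∧ (∀ s ∈ S, h s = 0) ∧ h x ≠ 0 := by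
  haveI : IsClosed (S : Set E) := hS
  have hz : (Submodule.Quotient.mk x : E ⧸ S) ≠ 0 := by
    simpa [Submodule.Quotient.mk_eq_zero] using hx
  obtain ⟨g, hg1, hgx⟩ := exists_dual_vector ℝ _ (norm_ne_zero_iff.mpr hz)
  refine ⟨g.comp (quotCLM S), ?_, ?_, ?_⟩
  · calc ‖g.comp (quotCLM S)‖ ≤ ‖g‖ * ‖quotCLM S‖ := g.opNorm_comp_le _
    _ ≤ 1 := by rw [hg1]; simpa using quotCLM_norm_le S
  · intro s hs
    have : quotCLM S s = 0 := by
      rw [quotCLM_apply, Submodule.Quotient.mk_eq_zero]; exact hs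
    simp [ContinuousLinearMap.comp_apply, this]
  · have : g.comp (quotCLM S) x = ‖(Submodule.Quotient.mk x : E ⧸ S)‖ := by
      rw [ContinuousLinearMap.comp_apply, quotCLM_apply, hgx]; norm_num
    rw [this]
    simpa using hz

set_option maxHeartbeats 1000000 in
/-- Approximate Helly theorem. -/
lemma aux_helly {Y : Type*} [NormedAddCommGroup Y] [NormedSpace ℝ Y]
    (F : (Y →L[ℝ] ℝ) →L[ℝ] ℝ) {n : ℕ} (f : Fin n → Y →L[ℝ] ℝ) {ε δ : ℝ}
    (hε : 0 < ε) (hδ : 0 < δ) :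
    ∃ y : Y, ‖y‖ ≤ ‖F‖ + ε ∧ ∀ i, |f i y - F (f i)| < δ := by
  classical
  set r : ℝ := ‖F‖ + ε with hr_def
  have hr : 0 < r := by positivity
  have hFr : ‖F‖ < r := by simp [hr_def, hε]
  set T : Y →L[ℝ] (Fin n → ℝ) := ContinuousLinearMap.pi f with hT_def
  set c : Fin n → ℝ := fun i => F (f i) with hc_def
  have hc : c ∈ closure (⇑T '' closedBall (0 : Y) r) := by
    by_contra hcn
    have conv : Convex ℝ (closure (⇑T '' closedBall (0 : Y) r)) :=
      ((convex_closedBall (0 : Y) r).linear_image (T : Y →ₗ[ℝ] (Fin n → ℝ))).closure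
    obtain ⟨g, u, hgA, hgc⟩ :=
      geometric_hahn_banach_closed_point conv isClosed_closure hcn
    have h0A : (0 : Fin n → ℝ) ∈ closure (⇑T '' closedBall (0 : Y) r) := by
      refine subset_closure ⟨0, mem_closedBall_self hr.le, by simp⟩
    have hu0 : 0 < u := by simpa using hgA _ h0A
    set G : Y →L[ℝ] ℝ := g.comp T with hG_def
    have hGlt : ∀ y : Y, ‖y‖ ≤ r → G y < u := fun y hy =>
      hgA _ (subset_closure ⟨y, by simpa using hy, rfl⟩)
    have hGnorm : ‖G‖ ≤ u / r := by
      refine ContinuousLinearMap.opNorm_le_bound _ (by positivity) fun y => ?_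
      rcases eq_or_ne y 0 with rfl | hy0
      · simp
      · have hny : 0 < ‖y‖ := norm_pos_iff.mpr hy0
        set y' : Y := (r / ‖y‖) • y with hy'_def
        have hy'norm : ‖y'‖ = r := by
          rw [hy'_def, norm_smul]
          rw [Real.norm_eq_abs, abs_of_pos (by positivity)]
          field_simp
        have h1 : G y' < u := hGlt _ hy'norm.le
        have h2 : G (-y') < u := by
          have := hGlt (-y') (by simpa using hy'norm.le)
          simpa using this
        have habs : |G y'| ≤ u := by
          rw [abs_le]; constructor
          · nlinarith [map_neg G y']
          · exact h1.le
        have hGy : G y = (‖y‖ / r) * G y' := by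
          rw [hy'_def, map_smul, smul_eq_mul]
          field_simp
        rw [Real.norm_eq_abs, hGy, abs_mul, abs_of_pos (by positivity)]
        rw [div_mul_eq_mul_div, mul_comm]
        rw [div_le_iff₀ (by positivity)]
        calc |G y'| * ‖y‖ ≤ u * ‖y‖ := by nlinarith [norm_nonneg y, abs_nonneg (G y')]
          _ = u / r * ‖y‖ * r := by field_simp
    -- key identity : F G = g c
    have hkey : F G = g c := by
      have hgv : ∀ v : Fin n → ℝ, g v = ∑ i, v i * g (Pi.single i 1) := by
        intro v
        conv_lhs => rw [pi_eq_sum_univ v]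
        rw [map_sum]
        refine Finset.sum_congr rfl fun i _ => ?_
        rw [map_smul, smul_eq_mul]
        congr 2
        funext j
        simp [Pi.single_apply, eq_comm]
      have hGsum : G = ∑ i, g (Pi.single i 1) • f i := by
        ext y
        rw [hG_def, ContinuousLinearMap.comp_apply, hgv]
        simp [hT_def, ContinuousLinearMap.pi_apply, mul_comm]
      rw [hGsum, hgv c]
      rw [map_sum]
      congr 1; ext i
      simp [hc_def, mul_comm]
    have hFG : F G ≤ ‖F‖ * ‖G‖ := by
      calc F G ≤ |F G| := le_abs_self _
        _ ≤ ‖F‖ * ‖G‖ := F.le_opNorm G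
    have : (u : ℝ) < u := by
      calc u < g c := hgc
        _ = F G := hkey.symm
        _ ≤ ‖F‖ * ‖G‖ := hFG
        _ ≤ ‖F‖ * (u / r) := by
            apply mul_le_mul_of_nonneg_left hGnorm (norm_nonneg F)
        _ < r * (u / r) := by
            apply mul_lt_mul_of_pos_right hFr (by positivity)
        _ = u := by field_simp
    exact lt_irrefl _ this
  obtain ⟨b, hb, hdist⟩ := Metric.mem_closure_iff.mp hc δ hδ
  obtain ⟨y, hy, rfl⟩ := hb
  refine ⟨y, by simpa using hy, fun i => ?_⟩
  have : dist (c i) (T y i) ≤ dist c (T y) := dist_le_pi_dist c (T y) i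
  have h2 : |f i y - F (f i)| = dist (c i) (T y i) := by
    rw [Real.dist_eq, abs_sub_comm]
    simp [hc_def, hT_def, ContinuousLinearMap.pi_apply]
  rw [h2]
  exact lt_of_le_of_lt this hdist

@[reducible] def instNormSMulClassDD {Y : Type*} [NormedAddCommGroup Y] [NormedSpace ℝ Y] :
    NormSMulClass ℝ (StrongDual ℝ (StrongDual ℝ Y)) :=
  @NormedSpace.toNormSMulClass ℝ (StrongDual ℝ (StrongDual ℝ Y)) _
    ContinuousLinearMap.toSeminormedAddCommGroup ContinuousLinearMap.toNormedSpace

@[reducible] noncomputable def instAddCommGroupSubDD {Y : Type*} [NormedAddCommGroup Y] [NormedSpace ℝ Y]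
    (M : Submodule ℝ (StrongDual ℝ (StrongDual ℝ Y))) : AddCommGroup M :=
  Submodule.addCommGroup (R := ℝ) (M := StrongDual ℝ (StrongDual ℝ Y)) M

attribute [local instance] instNormSMulClassDD instAddCommGroupSubDD

noncomputable def auxEps (n : ℕ) : ℝ := 1 / (n + 2)

lemma auxEps_pos (n : ℕ) : 0 < auxEps n := by unfold auxEps; positivity

lemma auxEps_le_half (n : ℕ) : auxEps n ≤ 1 / 2 := by
  unfold auxEps
  rw [div_le_div_iff₀ (by positivity) (by norm_num)]
  have : (0:ℝ) ≤ n := Nat.cast_nonneg n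
  linarith

lemma auxEps_antitone {m n : ℕ} (h : m ≤ n) : auxEps n ≤ auxEps m := by
  unfold auxEps
  apply one_div_le_one_div_of_le (by positivity)
  have : (m:ℝ) ≤ n := Nat.cast_le.mpr h
  linarith

lemma auxEps_lt {n : ℕ} {b : ℝ} (hb : 0 < b) (h : 1 / b < (n:ℝ) + 2) : auxEps n < b := by
  unfold auxEps
  rw [div_lt_iff₀ (by positivity)]
  rw [div_lt_iff₀ hb] at h
  linarith [mul_pos hb (show (0:ℝ) < (n:ℝ) + 2 by positivity)]

set_option maxHeartbeats 1000000 in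
lemma aux_setup {Y : Type*} [NormedAddCommGroup Y] [NormedSpace ℝ Y] [CompleteSpace Y]
    (hsurj : ¬ Function.Surjective (inclusionInDoubleDual ℝ Y)) :
    ∃ F : StrongDual ℝ (StrongDual ℝ Y), ‖F‖ ≤ 3/4 ∧
      ∀ G ∈ LinearMap.range (inclusionInDoubleDual ℝ Y : Y →ₗ[ℝ] StrongDual ℝ (StrongDual ℝ Y)), (1:ℝ)/2 ≤ ‖F - G‖ := by
  rw [Function.Surjective] at hsurj; push_neg at hsurj
  obtain ⟨F₀, hF₀⟩ := hsurj
  set J := inclusionInDoubleDual ℝ Y with hJ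
  set R : Submodule ℝ (StrongDual ℝ (StrongDual ℝ Y)) := LinearMap.range (J : Y →ₗ[ℝ] StrongDual ℝ (StrongDual ℝ Y)) with hR
  have hRc : IsClosed (R : Set (StrongDual ℝ (StrongDual ℝ Y))) := by
    have hiso : Isometry (⇑J) := (inclusionInDoubleDualLi ℝ (E := Y)).isometry
    have := hiso.isClosedEmbedding.isClosed_range
    simpa [hR, LinearMap.coe_range] using this
  have hF₀R : F₀ ∉ R := by
    rw [hR]
    intro hmem
    obtain ⟨x, hx⟩ := LinearMap.mem_range.mp hmem
    exact hF₀ x hx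
  obtain ⟨x₀, hx₀R, hx₀⟩ := riesz_lemma (𝕜 := ℝ) (E := StrongDual ℝ (StrongDual ℝ Y)) hRc ⟨F₀, hF₀R⟩ (r := 3/4) (by norm_num)
  have hx₀0 : x₀ ≠ 0 := by rintro rfl; exact hx₀R R.zero_mem
  have hn0 : (0:ℝ) < ‖x₀‖ := by
    rcases lt_or_eq_of_le (norm_nonneg x₀) with h | h
    · exact h
    · exact absurd ((norm_eq_zero (E := StrongDual ℝ (StrongDual ℝ Y))).mp h.symm) hx₀0
  refine ⟨(3 / (4 * ‖x₀‖)) • x₀, ?_, ?_⟩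
  · rw [norm_smul, Real.norm_eq_abs, abs_of_pos (div_pos (by norm_num) (by linarith))]
    rw [div_mul_eq_mul_div, div_le_iff₀ (by linarith)]
    ring_nf
    nlinarith
  · intro G hG
    have hG' : ((4 * ‖x₀‖) / 3) • G ∈ R := R.smul_mem _ hG
    have key : (3 / (4 * ‖x₀‖)) • x₀ - G = (3 / (4 * ‖x₀‖)) • (x₀ - ((4 * ‖x₀‖) / 3) • G) := by
      rw [smul_sub (M := ℝ) (A := StrongDual ℝ (StrongDual ℝ Y)), smul_smul]
      congr 2
      field_simp
      exact (one_smul ℝ G).symm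
    rw [key, norm_smul, Real.norm_eq_abs, abs_of_pos (div_pos (by norm_num) (by linarith))]
    have h34 := hx₀ _ hG'
    calc (1:ℝ)/2 ≤ (3 / (4 * ‖x₀‖)) * ((3/4) * ‖x₀‖) := by
          rw [div_mul_eq_mul_div]
          rw [le_div_iff₀ (by linarith)]
          ring_nf
          nlinarith
      _ ≤ _ := by
          apply mul_le_mul_of_nonneg_left h34 (le_of_lt (div_pos (by norm_num) (by linarith)))

lemma aux_fstep {Y : Type*} [NormedAddCommGroup Y] [NormedSpace ℝ Y]
    (F : StrongDual ℝ (StrongDual ℝ Y))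
    (hFd : ∀ G ∈ LinearMap.range (inclusionInDoubleDual ℝ Y : Y →ₗ[ℝ] StrongDual ℝ (StrongDual ℝ Y)), (1:ℝ)/2 ≤ ‖F - G‖)
    (n : ℕ) (x : Fin n → Y) {δ : ℝ} (hδ : 0 < δ) :
    ∃ f : StrongDual ℝ Y, ‖f‖ ≤ 1 ∧ (∀ j, |f (x j)| < δ) ∧ |F f - 1/4| < δ := by
  classical
  set J := inclusionInDoubleDual ℝ Y with hJ
  set M : Submodule ℝ (StrongDual ℝ (StrongDual ℝ Y)) :=
    Submodule.span ℝ (Set.range (fun j : Fin n => J (x j))) with hM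
  haveI : FiniteDimensional ℝ M := FiniteDimensional.span_of_finite ℝ (Set.finite_range (fun j : Fin n => J (x j)))
  have hMc : IsClosed (M : Set (StrongDual ℝ (StrongDual ℝ Y))) := Submodule.closed_of_finiteDimensional (𝕜 := ℝ) (E := StrongDual ℝ (StrongDual ℝ Y)) M
  have hMR : M ≤ LinearMap.range (J : Y →ₗ[ℝ] StrongDual ℝ (StrongDual ℝ Y)) := by
    rw [hM, Submodule.span_le]
    rintro _ ⟨j, rfl⟩
    exact LinearMap.mem_range_self _ _
  have hdist : ∀ m ∈ M, (1:ℝ)/2 ≤ ‖F - m‖ := fun m hm => hFd m (hMR hm)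
  obtain ⟨Φ, hΦn, hΦ0, hΦF⟩ :=
    aux_sep2 M hMc F (c := 1/2) (θ := 1/4) (by norm_num) (by norm_num) hdist
  have hΦhalf : ‖Φ‖ ≤ 1/2 := le_trans hΦn (by norm_num)
  obtain ⟨f, hfn, hfi⟩ := aux_helly (Y := StrongDual ℝ Y) Φ
    (f := Fin.snoc (fun j : Fin n => J (x j)) F) (ε := 1/2) (by norm_num) hδ
  refine ⟨f, by linarith, ?_, ?_⟩
  · intro j
    have h2 := hfi (Fin.castSucc j)
    rw [Fin.snoc_castSucc] at h2
    have h3 : Φ (J (x j)) = 0 := hΦ0 _ (Submodule.subset_span ⟨j, rfl⟩)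
    rw [h3] at h2
    rw [hJ] at h2
    simpa using h2
  · have h2 := hfi (Fin.last n)
    rw [Fin.snoc_last, hΦF] at h2
    exact h2

lemma aux_xstep {Y : Type*} [NormedAddCommGroup Y] [NormedSpace ℝ Y]
    (F : StrongDual ℝ (StrongDual ℝ Y)) (hFn : ‖F‖ ≤ 3/4) (n : ℕ) (f : Fin n → StrongDual ℝ Y)
    {δ : ℝ} (hδ : 0 < δ) :
    ∃ x : Y, ‖x‖ ≤ 1 ∧ ∀ i, |f i x - F (f i)| < δ := by
  obtain ⟨x, hx, hxi⟩ := aux_helly F f (ε := 1/4) (by norm_num) hδ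
  exact ⟨x, by linarith, hxi⟩

lemma aux_reflexive {Y : Type*} [NormedAddCommGroup Y] [NormedSpace ℝ Y] [CompleteSpace Y]
    (hcomp : ∀ x : ℕ → Y, (∀ n, ‖x n‖ ≤ 1) → ∃ (y : Y) (φ : ℕ → ℕ), StrictMono φ ∧
      ∀ h : StrongDual ℝ Y, Tendsto (fun k => h (x (φ k))) atTop (𝓝 (h y))) :
    Function.Surjective (inclusionInDoubleDual ℝ Y) := by
  classical
  by_contra hsurj
  obtain ⟨F, hFn, hFd⟩ := aux_setup hsurj
  have fstep : ∀ (n : ℕ) (v : ℕ → (StrongDual ℝ Y × Y)), ∃ f : StrongDual ℝ Y, ‖f‖ ≤ 1 ∧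
      (∀ j, j < n → |f ((v j).2)| < auxEps n) ∧ |F f - 1/4| < auxEps n := by
    intro n v
    obtain ⟨f, h1, h2, h3⟩ := aux_fstep F hFd n (fun j : Fin n => (v j).2) (auxEps_pos n)
    exact ⟨f, h1, fun j hj => h2 ⟨j, hj⟩, h3⟩
  have xstep : ∀ (n : ℕ) (v : ℕ → (StrongDual ℝ Y × Y)) (f : StrongDual ℝ Y), ∃ x : Y, ‖x‖ ≤ 1 ∧
      (∀ i, i < n → |(v i).1 x - F ((v i).1)| < auxEps n) ∧ |f x - F f| < auxEps n := by
    intro n v f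
    obtain ⟨x, h1, h2⟩ := aux_xstep F hFn (n+1)
      (Fin.snoc (fun i : Fin n => (v i).1) f) (auxEps_pos n)
    refine ⟨x, h1, fun i hi => ?_, ?_⟩
    · have := h2 (Fin.castSucc ⟨i, hi⟩); rwa [Fin.snoc_castSucc] at this
    · have := h2 (Fin.last n); rwa [Fin.snoc_last] at this
  set step : ℕ → (ℕ → (StrongDual ℝ Y × Y)) → (StrongDual ℝ Y × Y) := fun n v =>
    ((fstep n v).choose, (xstep n v (fstep n v).choose).choose) with hstep
  set Q : ℕ → (ℕ → (StrongDual ℝ Y × Y)) := fun n =>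
    Nat.rec (fun _ => (0, 0)) (fun m prev => Function.update prev m (step m prev)) n with hQdef
  set p : ℕ → (StrongDual ℝ Y × Y) := fun n => step n (Q n) with hp
  set f : ℕ → StrongDual ℝ Y := fun n => (p n).1 with hf
  set x : ℕ → Y := fun n => (p n).2 with hx
  have hstab : ∀ n k, k < n → Q n k = p k := by
    intro n
    induction n with
    | zero => intro k hk; omega
    | succ n ih =>
      intro k hk
      have hQs : Q (n+1) = Function.update (Q n) n (step n (Q n)) := rfl
      rcases Nat.lt_succ_iff_lt_or_eq.mp hk with h | h
      · rw [hQs, Function.update_of_ne (Nat.ne_of_lt h), ih k h]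
      · subst h
        rw [hQs, Function.update_self]
  have hfspec : ∀ n, ‖f n‖ ≤ 1 ∧ (∀ j, j < n → |f n ((Q n j).2)| < auxEps n) ∧
      |F (f n) - 1/4| < auxEps n := fun n => (fstep n (Q n)).choose_spec
  have hxspec : ∀ n, ‖x n‖ ≤ 1 ∧ (∀ i, i < n → |(Q n i).1 (x n) - F ((Q n i).1)| < auxEps n) ∧
      |f n (x n) - F (f n)| < auxEps n := fun n => (xstep n (Q n) (fstep n (Q n)).choose).choose_spec
  have hA : ∀ n, ‖f n‖ ≤ 1 := fun n => (hfspec n).1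
  have hB : ∀ n, ‖x n‖ ≤ 1 := fun n => (hxspec n).1
  have hC : ∀ n, |F (f n) - 1/4| < auxEps n := fun n => (hfspec n).2.2
  have hD : ∀ n j, j < n → |f n (x j)| < auxEps n := by
    intro n j hj
    have h2 := (hfspec n).2.1 j hj
    rwa [hstab n j hj] at h2
  have hE : ∀ n i, i ≤ n → |f i (x n) - F (f i)| < auxEps n := by
    intro n i hi
    rcases lt_or_eq_of_le hi with h | h
    · have h2 := (hxspec n).2.1 i h
      rwa [hstab n i h] at h2
    · subst h
      exact (hxspec i).2.2
  obtain ⟨y, φ, hφ, hconv⟩ := hcomp x hB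
  have hfy : ∀ n, 1/4 - 2 * auxEps n ≤ f n y := by
    intro n
    apply ge_of_tendsto (hconv (f n))
    filter_upwards [eventually_ge_atTop n] with k hk
    have h1 : n ≤ φ k := le_trans hk (hφ.id_le k)
    have h2 := hE (φ k) n h1
    have h3 := hC n
    have h4 : auxEps (φ k) ≤ auxEps n := auxEps_antitone h1
    rw [abs_lt] at h2 h3
    have h2a := h2.1
    have h3a := h3.1
    linarith
  set Sp : Submodule ℝ Y := Submodule.span ℝ (Set.range x) with hSp
  have hyS : y ∈ Sp.topologicalClosure := by
    by_contra hyn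
    obtain ⟨h, hh1, hh2, hh3⟩ :=
      aux_sep Sp.topologicalClosure Sp.isClosed_topologicalClosure y hyn
    have hzero : ∀ m, h (x m) = 0 := fun m =>
      hh2 _ (Sp.le_topologicalClosure (Submodule.subset_span (Set.mem_range_self m)))
    have ht := hconv h
    have hc0 : Tendsto (fun _ : ℕ => (0:ℝ)) atTop (𝓝 (h y)) := by
      simpa [hzero] using ht
    exact hh3 (tendsto_nhds_unique tendsto_const_nhds hc0).symm
  have hyc : y ∈ closure (Sp : Set Y) := by
    rw [← Submodule.topologicalClosure_coe]; exact hyS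
  obtain ⟨z, hzS, hzd⟩ := Metric.mem_closure_iff.mp hyc (1/16) (by norm_num)
  obtain ⟨cc, hcc⟩ := Finsupp.mem_span_range_iff_exists_finsupp.mp hzS
  set C : ℝ := ∑ i ∈ cc.support, |cc i| with hCdef
  have hC0 : (0:ℝ) ≤ C := Finset.sum_nonneg fun i _ => abs_nonneg _
  obtain ⟨n₁, hn₁⟩ := exists_nat_gt (16 * (C+1) + 32)
  set n := n₁ + (cc.support.sup id) + 1 with hn
  have hn₁n : (n₁ : ℝ) ≤ (n : ℝ) := by
    have : n₁ ≤ n := by omega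
    exact_mod_cast this
  have hne1 : auxEps n < 1/32 := by
    apply auxEps_lt (by norm_num)
    have h32 : (1:ℝ)/(1/32) = 32 := by norm_num
    rw [h32]
    linarith
  have hεn : auxEps n < 1/(16*(C+1)) := by
    apply auxEps_lt (by positivity)
    have h16 : (1:ℝ)/(1/(16*(C+1))) = 16*(C+1) := by
      rw [one_div_one_div]
    rw [h16]
    linarith
  have hne2 : C * auxEps n < 1/16 := by
    calc C * auxEps n ≤ (C+1) * auxEps n := by
          nlinarith [auxEps_pos n]
      _ < (C+1) * (1/(16*(C+1))) := by
          apply mul_lt_mul_of_pos_left hεn (by linarith)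
      _ = 1/16 := by
          rw [mul_one_div]
          rw [div_eq_div_iff (by positivity) (by norm_num)]
          ring
  have hfnz : |f n z| ≤ C * auxEps n := by
    rw [← hcc]
    have hmap : f n (cc.sum fun i a => a • x i) = ∑ i ∈ cc.support, cc i * f n (x i) := by
      rw [map_finsuppSum, Finsupp.sum]
      refine Finset.sum_congr rfl fun i _ => ?_
      rw [map_smul, smul_eq_mul]
    rw [hmap]
    calc |∑ i ∈ cc.support, cc i * f n (x i)|
        ≤ ∑ i ∈ cc.support, |cc i * f n (x i)| := Finset.abs_sum_le_sum_abs _ _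
      _ ≤ ∑ i ∈ cc.support, |cc i| * auxEps n := by
          apply Finset.sum_le_sum
          intro i hi
          rw [abs_mul]
          apply mul_le_mul_of_nonneg_left _ (abs_nonneg _)
          have hile : i ≤ cc.support.sup id := Finset.le_sup (f := id) hi
          have hilt : i < n := by omega
          exact (hD n i hilt).le
      _ = C * auxEps n := by rw [← Finset.sum_mul]
  have hyz : |f n y - f n z| < 1/16 := by
    calc |f n y - f n z| = |f n (y - z)| := by rw [map_sub]
      _ ≤ ‖f n‖ * ‖y - z‖ := by
          simpa [Real.norm_eq_abs] using (f n).le_opNorm (y - z)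
      _ ≤ 1 * ‖y - z‖ := mul_le_mul_of_nonneg_right (hA n) (norm_nonneg _)
      _ < 1/16 := by rw [one_mul, ← dist_eq_norm]; exact hzd
  have h5 := hfy n
  have h6 : f n y ≤ C * auxEps n + 1/16 := by
    have e1 := le_abs_self (f n z)
    have e2 := le_abs_self (f n y - f n z)
    linarith
  linarith

end DDInst

open ZeroAtInfty

open Metric Set NormedSpace
attribute [local instance] instNormSMulClassDD instAddCommGroupSubDD

/-- A Grothendieck space with weak*-sequentially compact dual ball is reflexive. -/
theorem grothendieck_wstarSeqCompact_reflexive (X : Type*)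
    [NormedAddCommGroup X] [NormedSpace ℝ X] [CompleteSpace X]
    (hX : IsGrothendieck X)
    (hball : ∀ f : ℕ → X →L[ℝ] ℝ, (∀ n, ‖f n‖ ≤ 1) →
      ∃ (g : X →L[ℝ] ℝ) (φ : ℕ → ℕ), StrictMono φ ∧
        WeakStarConv X (fun k => f (φ k)) g) :
    Function.Surjective (NormedSpace.inclusionInDoubleDual ℝ X) := by
  have hcomp : ∀ x : ℕ → StrongDual ℝ X, (∀ n, ‖x n‖ ≤ 1) →
      ∃ (y : StrongDual ℝ X) (φ : ℕ → ℕ), StrictMono φ ∧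
        ∀ h : StrongDual ℝ (StrongDual ℝ X), Tendsto (fun k => h (x (φ k))) atTop (𝓝 (h y)) := by
    intro x hx
    obtain ⟨g, φ, hφ, hws⟩ := hball x hx
    exact ⟨g, φ, hφ, fun h => hX (fun k => x (φ k)) g hws h⟩
  have hsurj1 : Function.Surjective (inclusionInDoubleDual ℝ (StrongDual ℝ X)) :=
    aux_reflexive hcomp
  intro F
  by_contra hF
  have hFr : F ∉ LinearMap.range (inclusionInDoubleDual ℝ X : X →ₗ[ℝ] StrongDual ℝ (StrongDual ℝ X)) := by
    intro hmem
    obtain ⟨w, hw⟩ := LinearMap.mem_range.mp hmem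
    exact hF ⟨w, hw⟩
  have hRc : IsClosed ((LinearMap.range (inclusionInDoubleDual ℝ X : X →ₗ[ℝ] StrongDual ℝ (StrongDual ℝ X))) : Set (StrongDual ℝ (StrongDual ℝ X))) := by
    have hiso : Isometry (⇑(inclusionInDoubleDual ℝ X)) :=
      (inclusionInDoubleDualLi ℝ (E := X)).isometry
    simpa [LinearMap.coe_range] using hiso.isClosedEmbedding.isClosed_range
  obtain ⟨Λ, hΛn, hΛ0, hΛF⟩ := aux_sep _ hRc F hFr
  obtain ⟨f, hf⟩ := hsurj1 Λ
  have hfx : ∀ v : X, f v = 0 := by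
    intro v
    have h1 : Λ (inclusionInDoubleDual ℝ X v) = 0 :=
      hΛ0 _ (LinearMap.mem_range_self _ v)
    have h2 : Λ (inclusionInDoubleDual ℝ X v) = (inclusionInDoubleDual ℝ X v) f := by
      rw [← hf]; rfl
    rw [h2] at h1
    simpa using h1
  have hf0 : f = 0 := ContinuousLinearMap.ext fun v => hfx v
  have hΛz : Λ = 0 := by
    rw [← hf, hf0, map_zero]
  rw [hΛz] at hΛF
  simp at hΛF
end

section
/- If every separable closed subspace W of a Banach space X is contained in a closed subspace Z of X which is a Grothendieck space, then X itself is a Grothendieck space. -/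
open Filter Topology ZeroAtInfty

lemma goldstine_fin {X : Type*} [NormedAddCommGroup X] [NormedSpace ℝ X]
    (Φ : (X →L[ℝ] ℝ) →L[ℝ] ℝ) {m : ℕ} (c : Fin m → (X →L[ℝ] ℝ)) {δ : ℝ} (hδ : 0 < δ) :
    ∃ x : X, ‖x‖ ≤ ‖Φ‖ + 1 ∧ ∀ i, |c i x - Φ (c i)| < δ := by
  set M : ℝ := ‖Φ‖ + 1 with hMdef
  have hM0 : 0 < M := by positivity
  set L : X →ₗ[ℝ] (Fin m → ℝ) := LinearMap.pi (fun i => (c i).toLinearMap) with hL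
  set C : Set (Fin m → ℝ) := L '' Metric.closedBall 0 M with hC
  set v : Fin m → ℝ := fun i => Φ (c i) with hv
  by_cases hvc : v ∈ closure C
  · obtain ⟨y, hyC, hyv⟩ := Metric.mem_closure_iff.1 hvc δ hδ
    obtain ⟨x, hxM, rfl⟩ := hyC
    refine ⟨x, by simpa [M] using Metric.mem_closedBall.1 hxM, fun i => ?_⟩
    have h1 : dist (v i) (L x i) ≤ dist v (L x) := dist_le_pi_dist v (L x) i
    rw [abs_sub_comm]
    calc |v i - L x i| = dist (v i) (L x i) := (Real.dist_eq _ _).symm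
      _ ≤ dist v (L x) := h1
      _ < δ := hyv
  · exfalso
    obtain ⟨f, u, hfu, huv⟩ := geometric_hahn_banach_closed_point
      ((convex_closedBall (0:X) M).linear_image L).closure isClosed_closure hvc
    set a : Fin m → ℝ := fun i => f (fun j => if i = j then 1 else 0) with ha
    set F : X →L[ℝ] ℝ := ∑ i, a i • c i with hF
    have hfy : ∀ y : Fin m → ℝ, f y = ∑ i, y i * a i := by
      intro y
      simpa [a, smul_eq_mul] using f.toLinearMap.pi_apply_eq_sum_univ y
    have hFx : ∀ x : X, F x = f (L x) := by
      intro x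
      rw [hfy]
      simp [F, L, ContinuousLinearMap.sum_apply, mul_comm]
    have hFu : ∀ x : X, ‖x‖ ≤ M → F x < u := by
      intro x hx
      rw [hFx]
      exact hfu _ (subset_closure ⟨x, Metric.mem_closedBall.2 (by simpa using hx), rfl⟩)
    have hu0 : 0 < u := by
      have := hFu 0 (by simp [hM0.le])
      simpa using this
    have hFnorm : ‖F‖ ≤ u / M := by
      refine F.opNorm_le_bound (by positivity) (fun x => ?_)
      rcases eq_or_ne x 0 with rfl | hx0
      · simp
      · have hxn : 0 < ‖x‖ := norm_pos_iff.2 hx0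
        set y : X := (M / ‖x‖) • x with hy
        have hyn : ‖y‖ = M := by
          rw [hy, norm_smul, Real.norm_eq_abs, abs_of_pos (div_pos hM0 hxn)]
          field_simp
        have h1 : F y < u := hFu y hyn.le
        have h2 : F (-y) < u := hFu (-y) (by simpa using hyn.le)
        have h3 : |F y| ≤ u := by
          rw [abs_le]
          refine ⟨?_, h1.le⟩
          have := map_neg F y
          nlinarith
        have h4 : F y = (M / ‖x‖) * F x := by rw [hy, map_smul]; rfl
        have h5 : (M / ‖x‖) * |F x| ≤ u := by
          calc (M / ‖x‖) * |F x| = |F y| := by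
                rw [h4, abs_mul, abs_of_pos (div_pos hM0 hxn)]
            _ ≤ u := h3
        rw [Real.norm_eq_abs, div_mul_eq_mul_div, le_div_iff₀ hM0]
        have h6 : M * |F x| ≤ u * ‖x‖ := by
          have h7 := mul_le_mul_of_nonneg_right h5 hxn.le
          calc M * |F x| = (M / ‖x‖) * |F x| * ‖x‖ := by field_simp
            _ ≤ u * ‖x‖ := h7
        linarith
    have hfv : f v = Φ F := by
      rw [hfy]
      simp [F, v, map_sum, map_smul, smul_eq_mul, mul_comm]
    have h1 : Φ F ≤ ‖Φ‖ * ‖F‖ := (Real.le_norm_self _).trans (Φ.le_opNorm F)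
    have h2 : ‖Φ‖ * ‖F‖ ≤ ‖Φ‖ * (u / M) := mul_le_mul_of_nonneg_left hFnorm (norm_nonneg Φ)
    have h3 : ‖Φ‖ * (u / M) < M * (u / M) := by
      apply mul_lt_mul_of_pos_right _ (by positivity)
      simp [M]
    have h4 : M * (u / M) = u := by field_simp
    rw [hfv] at huv
    linarith

lemma mapClusterPt_eq_of_tendsto {c L : ℝ} {v : ℕ → ℝ}
    (h : MapClusterPt c atTop v) (hL : Tendsto v atTop (𝓝 L)) : c = L :=
  eq_of_nhds_neBot (h.clusterPt.mono hL)

set_option maxHeartbeats 1000000 in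
set_option synthInstance.maxHeartbeats 1000000 in
/-- The Grothendieck property is separably determined: if every separable closed subspace
of `X` is contained in a closed Grothendieck subspace, then `X` is Grothendieck. -/
theorem grothendieck_of_separable_subspaces (X : Type*)
    [NormedAddCommGroup X] [NormedSpace ℝ X] [CompleteSpace X]
    (h : ∀ W : Submodule ℝ X, IsClosed (W : Set X) →
      TopologicalSpace.SeparableSpace W →
      ∃ Z : Submodule ℝ X, IsClosed (Z : Set X) ∧ W ≤ Z ∧ IsGrothendieck Z) :
    IsGrothendieck X := by
  intro f g hconv Φ
  by_contra hne
  rw [Metric.tendsto_atTop] at hne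
  push_neg at hne
  obtain ⟨ε, hε, hfreq⟩ := hne
  obtain ⟨φ, hφmono, hφ⟩ := extraction_of_frequently_atTop (frequently_atTop.2 hfreq)
  -- choose approximating points
  have hx : ∀ j : ℕ, ∃ x : X, ‖x‖ ≤ ‖Φ‖ + 1 ∧ |g x - Φ g| < 1/(j+1) ∧
      ∀ i ≤ j, |f (φ i) x - Φ (f (φ i))| < 1/(j+1) := by
    intro j
    obtain ⟨x, hx1, hx2⟩ := goldstine_fin Φ (m := j+2)
      (fun i => if h : (i : ℕ) < j+1 then f (φ i) else g)
      (δ := 1/(j+1)) (by positivity)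
    refine ⟨x, hx1, ?_, ?_⟩
    · have := hx2 ⟨j+1, by omega⟩
      simpa using this
    · intro i hi
      have := hx2 ⟨i, by omega⟩
      rw [dif_pos (by simpa using Nat.lt_succ_of_le hi)] at this
      simpa using this
  choose x hxn hxg hxf using hx
  -- separable closed subspace
  set W : Submodule ℝ X := (Submodule.span ℝ (Set.range x)).topologicalClosure with hW
  have hWclosed : IsClosed (W : Set X) := Submodule.isClosed_topologicalClosure _
  have hWsep : TopologicalSpace.SeparableSpace W := by
    have h1 : TopologicalSpace.IsSeparable (Submodule.span ℝ (Set.range x) : Set X) :=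
      ((Set.countable_range x).isSeparable).span
    have h2 : TopologicalSpace.IsSeparable (W : Set X) := by
      rw [hW, Submodule.topologicalClosure_coe]
      exact h1.closure
    exact h2.separableSpace
  obtain ⟨Z, hZclosed, hWZ, hZG⟩ := h W hWclosed hWsep
  have hxZ : ∀ j, x j ∈ Z := fun j =>
    hWZ (Submodule.le_topologicalClosure _ (Submodule.subset_span ⟨j, rfl⟩))
  -- restrictions
  set r : ℕ → (Z →L[ℝ] ℝ) := fun n => (f n).comp Z.subtypeL with hr
  set rg : Z →L[ℝ] ℝ := g.comp Z.subtypeL with hrg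
  have hrconv : WeakStarConv Z r rg := fun z => hconv z
  have hweak := hZG r rg hrconv
  -- cluster point in the bidual of Z
  letI : NormedSpace ℝ Z := Submodule.normedSpace Z
  set M : ℝ := ‖Φ‖ + 1 with hM
  set e : ℕ → WeakDual ℝ (Z →L[ℝ] ℝ) := fun j =>
    StrongDual.toWeakDual (NormedSpace.inclusionInDoubleDual ℝ Z ⟨x j, hxZ j⟩) with he
  set S : Set (WeakDual ℝ (↥Z →L[ℝ] ℝ)) :=
    WeakDual.toStrongDual (𝕜 := ℝ) (E := ↥Z →L[ℝ] ℝ) ⁻¹' Metric.closedBall 0 M with hS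
  have hmem : ∀ j, e j ∈ S := by
    intro j
    have h1 : ‖WeakDual.toStrongDual (𝕜 := ℝ) (E := ↥Z →L[ℝ] ℝ) (e j)‖ ≤ M := by
      calc ‖WeakDual.toStrongDual (𝕜 := ℝ) (E := ↥Z →L[ℝ] ℝ) (e j)‖
          ≤ ‖(⟨x j, hxZ j⟩ : Z)‖ := NormedSpace.double_dual_bound ℝ Z _
        _ = ‖x j‖ := rfl
        _ ≤ M := hxn j
    simp only [hS, Set.mem_preimage, Metric.mem_closedBall]
    exact (dist_zero_right (E := StrongDual ℝ (↥Z →L[ℝ] ℝ)) _).trans_le h1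
  have hle : map e atTop ≤ 𝓟 S := by
    rw [le_principal_iff, mem_map]
    exact Eventually.of_forall hmem
  obtain ⟨Ψ, -, hΨ⟩ := (WeakDual.isCompact_closedBall (𝕜 := ℝ) (E := Z →L[ℝ] ℝ) 0 M).exists_mapClusterPt hle
  -- evaluation at Ψ is a cluster point of evaluations
  have hcl : ∀ q : Z →L[ℝ] ℝ, MapClusterPt (Ψ q) atTop (fun k => e k q) := by
    intro q
    exact hΨ.tendsto_comp (f := fun A : WeakDual ℝ (Z →L[ℝ] ℝ) => A q)
      ((WeakDual.eval_continuous q).tendsto Ψ)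
  have hbound : Tendsto (fun k : ℕ => 1/((k:ℝ)+1)) atTop (𝓝 0) :=
    tendsto_one_div_add_atTop_nhds_zero_nat
  -- Ψ reproduces Φ on the subsequence and at g
  have hΨr : ∀ i, Ψ (r (φ i)) = Φ (f (φ i)) := by
    intro i
    refine mapClusterPt_eq_of_tendsto (hcl (r (φ i))) ?_
    have heq : ∀ k, e k (r (φ i)) = f (φ i) (x k) := fun k => rfl
    simp only [heq]
    rw [tendsto_iff_dist_tendsto_zero]
    apply squeeze_zero' (Eventually.of_forall fun k => dist_nonneg)
      (g := fun k : ℕ => 1/((k:ℝ)+1)) ?_ hbound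
    filter_upwards [eventually_ge_atTop i] with k hk
    rw [Real.dist_eq]
    exact (hxf k i hk).le
  have hΨg : Ψ rg = Φ g := by
    refine mapClusterPt_eq_of_tendsto (hcl rg) ?_
    have heq : ∀ k, e k rg = g (x k) := fun k => rfl
    simp only [heq]
    rw [tendsto_iff_dist_tendsto_zero]
    apply squeeze_zero' (Eventually.of_forall fun k => dist_nonneg)
      (g := fun k : ℕ => 1/((k:ℝ)+1)) ?_ hbound
    filter_upwards with k
    rw [Real.dist_eq]
    exact (hxg k).le
  -- contradiction with weak convergence in Z*
  have htend : Tendsto (fun n => Ψ (r n)) atTop (𝓝 (Ψ rg)) :=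
    hweak (WeakDual.toStrongDual Ψ)
  have htend2 : Tendsto (fun i => Φ (f (φ i))) atTop (𝓝 (Φ g)) := by
    have := htend.comp hφmono.tendsto_atTop
    simpa only [Function.comp_def, hΨr, hΨg] using this
  rw [Metric.tendsto_atTop] at htend2
  obtain ⟨N, hN⟩ := htend2 ε hε
  exact absurd (hN N le_rfl) (not_lt.2 (hφ N))
end

section
/- The Grothendieck property is a three-space property: if M is a closed subspace of a Banach space X such that both M and X/M are Grothendieck spaces, then X is a Grothendieck space. -/
open Filter Topology ZeroAtInfty

private noncomputable def quotLiftCLM {X : Type*} [NormedAddCommGroup X] [NormedSpace ℝ X]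
    (M : Submodule ℝ X) (h : X →L[ℝ] ℝ) (hker : ∀ x ∈ M, h x = 0) : (X ⧸ M) →L[ℝ] ℝ :=
  LinearMap.mkContinuous
    (Submodule.liftQ M h.toLinearMap fun x hx => by simpa using hker x hx) ‖h‖ (by
      intro z
      refine le_of_forall_pos_le_add fun δ hδ => ?_
      have hδ' : 0 < δ / (‖h‖ + 1) := by positivity
      obtain ⟨m, rfl, hm⟩ := Submodule.Quotient.norm_mk_lt z hδ'
      rw [Submodule.liftQ_apply]
      show ‖h m‖ ≤ _
      have h2' : ‖h m‖ ≤ ‖h‖ * ‖m‖ := h.le_opNorm m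
      have h3' : ‖h‖ * ‖m‖ ≤ ‖h‖ * (‖(Submodule.Quotient.mk m : X ⧸ M)‖ + δ / (‖h‖ + 1)) :=
        mul_le_mul_of_nonneg_left hm.le (norm_nonneg _)
      have h4' : ‖h‖ * (δ / (‖h‖ + 1)) ≤ δ := by
        rw [mul_div_assoc', div_le_iff₀ (by positivity)]
        nlinarith [norm_nonneg h, hδ.le]
      have h5' : ‖h‖ * (‖(Submodule.Quotient.mk m : X ⧸ M)‖ + δ / (‖h‖ + 1)) =
          ‖h‖ * ‖(Submodule.Quotient.mk m : X ⧸ M)‖ + ‖h‖ * (δ / (‖h‖ + 1)) := mul_add _ _ _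
      linarith)

private lemma quotLiftCLM_apply {X : Type*} [NormedAddCommGroup X] [NormedSpace ℝ X]
    (M : Submodule ℝ X) (h : X →L[ℝ] ℝ) (hker : ∀ x ∈ M, h x = 0) (x : X) :
    quotLiftCLM M h hker (Submodule.Quotient.mk x) = h x := rfl

set_option maxHeartbeats 1000000 in
private lemma grothendieck_key (X : Type*)
    [NormedAddCommGroup X] [NormedSpace ℝ X]
    (M : Submodule ℝ X)
    (h1 : IsGrothendieck M) (h2 : IsGrothendieck (X ⧸ M))
    (f : ℕ → X →L[ℝ] ℝ) (hf : ∀ x : X, Tendsto (fun n => f n x) atTop (𝓝 0))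
    (ψ : (X →L[ℝ] ℝ) →L[ℝ] ℝ) {ε : ℝ} (hε : 0 < ε)
    (hfreq : ∃ᶠ n in atTop, ε ≤ ψ (f n)) : False := by
  classical
  set J : ↥M →L[ℝ] X := M.subtypeL with hJ
  -- restrictions to M are weakly null in M* by h1
  have hres : ∀ Φ : (↥M →L[ℝ] ℝ) →L[ℝ] ℝ,
      Tendsto (fun n => Φ ((f n).comp J)) atTop (𝓝 0) := by
    intro Φ
    have hws : WeakStarConv ↥M (fun n => (f n).comp J) 0 := by
      intro m
      simpa [hJ] using hf (m : X)
    have := h1 (fun n => (f n).comp J) 0 hws Φ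
    simpa using this
  have hlinres : IsLinearMap ℝ (fun c : X →L[ℝ] ℝ => c.comp J) :=
    ⟨fun a b => ContinuousLinearMap.add_comp a b J,
     fun r a => ContinuousLinearMap.smul_comp r a J⟩
  -- Mazur step: convex combinations of tails with small restriction norm
  have claim : ∀ k : ℕ, ∃ c : X →L[ℝ] ℝ,
      c ∈ convexHull ℝ (f '' {n | k ≤ n ∧ ε ≤ ψ (f n)}) ∧
      ‖c.comp J‖ < 1 / ((k : ℝ) + 1) := by
    intro k
    by_contra hcon
    push_neg at hcon
    set S : Set (X →L[ℝ] ℝ) := f '' {n | k ≤ n ∧ ε ≤ ψ (f n)} with hS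
    set D : Set (↥M →L[ℝ] ℝ) :=
      closure ((fun c : X →L[ℝ] ℝ => c.comp J) '' convexHull ℝ S) with hD
    have hDconv : Convex ℝ D :=
      ((convex_convexHull ℝ S).is_linear_image hlinres).closure
    have h0 : (0 : ↥M →L[ℝ] ℝ) ∉ D := by
      intro h0mem
      have hk : (0 : ℝ) < 1 / ((k : ℝ) + 1) := by positivity
      have hcont : Continuous fun y : ↥M →L[ℝ] ℝ => ‖y‖ := @continuous_norm (↥M →L[ℝ] ℝ) _
      have hcl : IsClosed {y : ↥M →L[ℝ] ℝ | 1 / ((k : ℝ) + 1) ≤ ‖y‖} :=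
        isClosed_le continuous_const hcont
      have hsub : (fun c : X →L[ℝ] ℝ => c.comp J) '' convexHull ℝ S ⊆
          {y : ↥M →L[ℝ] ℝ | 1 / ((k : ℝ) + 1) ≤ ‖y‖} := by
        rintro _ ⟨cc, hcc, rfl⟩
        exact hcon cc hcc
      have hle : 1 / ((k : ℝ) + 1) ≤ ‖(0 : ↥M →L[ℝ] ℝ)‖ :=
        closure_minimal hsub hcl h0mem
      rw [ContinuousLinearMap.opNorm_zero] at hle
      linarith
    obtain ⟨Φ, u, hΦ0, hΦ⟩ := geometric_hahn_banach_point_closed hDconv isClosed_closure h0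
    have hu : 0 < u := by simpa using hΦ0
    have hev : ∀ᶠ n in atTop, Φ ((f n).comp J) < u :=
      (hres Φ).eventually_lt_const hu
    obtain ⟨n, hn1, hn2, hn3⟩ :=
      (hfreq.and_eventually (hev.and (eventually_ge_atTop k))).exists
    have hmem : (f n).comp J ∈ D :=
      subset_closure ⟨f n, subset_convexHull ℝ S ⟨n, ⟨hn3, hn1⟩, rfl⟩, rfl⟩
    exact absurd (hΦ _ hmem) (not_lt.2 hn2.le)
  choose c hcmem hcnorm using claim
  -- ψ stays ≥ ε on the convex combinations
  have hψc : ∀ k, ε ≤ ψ (c k) := by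
    intro k
    refine convexHull_min ?_ (convex_halfSpace_ge ⟨ψ.map_add, ψ.map_smul⟩ ε) (hcmem k)
    rintro _ ⟨n, ⟨-, hn⟩, rfl⟩
    exact hn
  -- pointwise convergence to 0 of the convex combinations
  have hcx : ∀ x : X, Tendsto (fun k => c k x) atTop (𝓝 0) := by
    intro x
    rw [Metric.tendsto_atTop]
    intro δ hδ
    have hev : ∀ᶠ n in atTop, ‖f n x‖ < δ / 2 := by
      have := (hf x).norm
      rw [norm_zero] at this
      exact this.eventually_lt_const (by linarith)
    obtain ⟨N, hN⟩ := eventually_atTop.1 hev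
    refine ⟨N, fun k hk => ?_⟩
    have hlin : IsLinearMap ℝ (fun y : X →L[ℝ] ℝ => y x) :=
      ⟨fun a b => rfl, fun r a => rfl⟩
    have hconv : Convex ℝ ({y : X →L[ℝ] ℝ | y x ≤ δ / 2} ∩ {y : X →L[ℝ] ℝ | -(δ / 2) ≤ y x}) :=
      (convex_halfSpace_le hlin (δ / 2)).inter (convex_halfSpace_ge hlin (-(δ / 2)))
    have hsub : f '' {n | k ≤ n ∧ ε ≤ ψ (f n)} ⊆
        ({y : X →L[ℝ] ℝ | y x ≤ δ / 2} ∩ {y : X →L[ℝ] ℝ | -(δ / 2) ≤ y x}) := by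
      rintro _ ⟨n, ⟨hnk, -⟩, rfl⟩
      have hb := hN n (le_trans hk hnk)
      rw [Real.norm_eq_abs] at hb
      obtain ⟨hb1, hb2⟩ := abs_lt.1 hb
      exact ⟨le_of_lt hb2, le_of_lt hb1⟩
    have hmem := convexHull_min hsub hconv (hcmem k)
    rw [Real.dist_eq, sub_zero]
    have habs : |c k x| ≤ δ / 2 := abs_le.2 ⟨hmem.2, hmem.1⟩
    linarith
  -- Hahn-Banach extension of the restrictions
  have hext : ∀ k, ∃ e : X →L[ℝ] ℝ,
      (∀ m : ↥M, e m = ((c k).comp J) m) ∧ ‖e‖ = ‖(c k).comp J‖ :=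
    fun k => exists_extension_norm_eq (𝕜 := ℝ) M ((c k).comp J)
  choose e he henorm using hext
  have henorm' : ∀ k, ‖e k‖ ≤ 1 / ((k : ℝ) + 1) := fun k => (henorm k).le.trans (hcnorm k).le
  have hone : Tendsto (fun k : ℕ => 1 / ((k : ℝ) + 1)) atTop (𝓝 0) :=
    tendsto_one_div_add_atTop_nhds_zero_nat
  have hex : ∀ x : X, Tendsto (fun k => e k x) atTop (𝓝 0) := by
    intro x
    have hone' := hone.mul_const ‖x‖
    rw [zero_mul] at hone'
    refine squeeze_zero_norm (fun k => ?_) hone'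
    calc ‖e k x‖ ≤ ‖e k‖ * ‖x‖ := (e k).le_opNorm x
    _ ≤ 1 / ((k : ℝ) + 1) * ‖x‖ :=
      mul_le_mul_of_nonneg_right (henorm' k) (norm_nonneg x)
  have hker : ∀ k, ∀ x ∈ M, (c k - e k) x = 0 := by
    intro k x hx
    have h1' := he k ⟨x, hx⟩
    rw [ContinuousLinearMap.sub_apply]
    rw [show ((⟨x, hx⟩ : ↥M) : X) = x from rfl] at h1'
    rw [h1', ContinuousLinearMap.comp_apply]
    rw [show (J (⟨x, hx⟩ : ↥M) : X) = x from rfl]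
    ring
  -- lift the corrected functionals to the quotient
  obtain ⟨g', hg'⟩ : ∃ g' : ℕ → (X ⧸ M) →L[ℝ] ℝ,
      ∀ k (x : X), g' k (Submodule.Quotient.mk x) = c k x - e k x :=
    ⟨fun k => quotLiftCLM M (c k - e k) (hker k), fun k x => by
      rw [quotLiftCLM_apply]
      rfl⟩
  obtain ⟨mkQc, hmkQc⟩ : ∃ q : X →L[ℝ] (X ⧸ M), ∀ x, q x = Submodule.Quotient.mk x :=
    ⟨LinearMap.mkContinuous M.mkQ 1 (fun x => by
        simpa using Submodule.Quotient.norm_mk_le M x),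
     fun x => rfl⟩
  obtain ⟨χ, hχ⟩ : ∃ χ : ((X ⧸ M) →L[ℝ] ℝ) →L[ℝ] ℝ, ∀ u, χ u = ψ (u.comp mkQc) :=
    ⟨ψ.comp ((ContinuousLinearMap.compL ℝ X (X ⧸ M) ℝ).flip mkQc), fun u => by
      rw [ContinuousLinearMap.comp_apply, ContinuousLinearMap.flip_apply,
        ContinuousLinearMap.compL_apply]⟩
  -- the lifted sequence is weak* null in (X/M)*
  have hws : WeakStarConv (X ⧸ M) g' 0 := by
    intro z
    obtain ⟨x, rfl⟩ := Submodule.Quotient.mk_surjective M z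
    have hlim : Tendsto (fun k => c k x - e k x) atTop (𝓝 0) := by
      have := (hcx x).sub (hex x)
      rwa [sub_zero] at this
    simp only [ContinuousLinearMap.zero_apply]
    exact hlim.congr fun k => (hg' k x).symm
  have hweak := h2 g' 0 hws χ
  rw [map_zero] at hweak
  have hχg : ∀ k, χ (g' k) = ψ (c k) - ψ (e k) := by
    intro k
    have hcomp : (g' k).comp mkQc = c k - e k := by
      ext x
      rw [ContinuousLinearMap.comp_apply, hmkQc, hg', ContinuousLinearMap.sub_apply]
    rw [hχ, hcomp, map_sub]
  have hψe : Tendsto (fun k => ψ (e k)) atTop (𝓝 0) := by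
    have hone' := hone.mul_const ‖ψ‖
    rw [zero_mul] at hone'
    refine squeeze_zero_norm (fun k => ?_) hone'
    calc ‖ψ (e k)‖ ≤ ‖ψ‖ * ‖e k‖ := ψ.le_opNorm _
    _ ≤ ‖ψ‖ * (1 / ((k : ℝ) + 1)) := mul_le_mul_of_nonneg_left (henorm' k) (norm_nonneg ψ)
    _ = 1 / ((k : ℝ) + 1) * ‖ψ‖ := mul_comm _ _
  have hψc0 : Tendsto (fun k => ψ (c k)) atTop (𝓝 0) := by
    have heq : (fun k => ψ (c k)) = fun k => χ (g' k) + ψ (e k) := by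
      funext k
      rw [hχg k]
      ring
    rw [heq]
    have := hweak.add hψe
    rwa [add_zero] at this
  have : ε ≤ 0 := ge_of_tendsto' hψc0 hψc
  linarith

/-- The Grothendieck property is a three-space property. -/
theorem grothendieck_threeSpace (X : Type*)
    [NormedAddCommGroup X] [NormedSpace ℝ X] [CompleteSpace X]
    (M : Submodule ℝ X) (hM : IsClosed (M : Set X))
    (h1 : IsGrothendieck M) (h2 : IsGrothendieck (X ⧸ M)) :
    IsGrothendieck X := by
  intro f g hfg φ
  have hf0 : ∀ x : X, Tendsto (fun n => (f n - g) x) atTop (𝓝 0) := by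
    intro x
    have h' := (hfg x).sub (tendsto_const_nhds (x := g x))
    rw [sub_self] at h'
    exact h'.congr fun n => (ContinuousLinearMap.sub_apply _ _ _).symm
  suffices hs : Tendsto (fun n => φ (f n - g)) atTop (𝓝 0) by
    have h' := hs.add (tendsto_const_nhds (x := φ g))
    rw [zero_add] at h'
    refine h'.congr fun n => ?_
    rw [map_sub]
    ring
  by_contra hc
  rw [Metric.tendsto_nhds] at hc
  push_neg at hc
  obtain ⟨ε, hε, hfr⟩ := hc
  have hfr' : ∃ᶠ n in atTop, ε ≤ |φ (f n - g)| := by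
    refine hfr.mono fun n hn => ?_
    rw [Real.dist_eq, sub_zero] at hn
    exact hn
  have hsplit : (∃ᶠ n in atTop, ε ≤ φ (f n - g)) ∨
      ∃ᶠ n in atTop, ε ≤ -φ (f n - g) := by
    rw [← Filter.frequently_or_distrib]
    exact hfr'.mono fun n hn => le_abs.1 hn
  rcases hsplit with hfr1 | hfr2
  · exact grothendieck_key X M h1 h2 (fun n => f n - g) hf0 φ hε hfr1
  · refine grothendieck_key X M h1 h2 (fun n => f n - g) hf0 (-φ) hε ?_
    refine hfr2.mono fun n hn => ?_
    rw [ContinuousLinearMap.neg_apply]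
    exact hn
end

section
/- If (P_i) is a Schauder decomposition of a Grothendieck Banach space X, then the adjoint projections (P_i*) form a Schauder decomposition of X*; that is, for every f ∈ X*, the partial sums S_n* f = (P_1 + ⋯ + P_n)* f converge to f in norm. -/
open Filter Topology ZeroAtInfty

/-- If `(P i)` is a Schauder decomposition of a Grothendieck space `X`, then the adjoint
projections form a Schauder decomposition of `X*`: the adjoints of the partial sums
converge to the identity in the strong (here: norm, pointwise on `X*`) sense. -/
theorem adjoint_schauderDecomposition_of_grothendieck (X : Type*)
    [NormedAddCommGroup X] [NormedSpace ℝ X] [CompleteSpace X]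
    (hX : IsGrothendieck X)
    (P : ℕ → X →L[ℝ] X)
    (hne : ∀ i, P i ≠ 0)
    (horth : ∀ i j, i ≠ j → (P i).comp (P j) = 0)
    (hdecomp : ∀ x : X, Tendsto (fun n => ∑ i ∈ Finset.range n, P i x) atTop (𝓝 x)) :
    ∀ f : X →L[ℝ] ℝ,
      Tendsto (fun n => f.comp (∑ i ∈ Finset.range n, P i)) atTop (𝓝 f) := by
  intro f
  set S : ℕ → X →L[ℝ] X := fun n => ∑ i ∈ Finset.range n, P i with hS
  have hSapp : ∀ n x, S n x = ∑ i ∈ Finset.range n, P i x := by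
    intro n x; simp [hS]
  -- uniform bound on the partial sums, by Banach–Steinhaus
  obtain ⟨C, hC⟩ : ∃ C, ∀ n, ‖S n‖ ≤ C := by
    apply banach_steinhaus
    intro x
    have h1 : Tendsto (fun n => ‖S n x‖) atTop (𝓝 ‖x‖) := by
      refine (continuous_norm.tendsto x).comp ?_
      simpa only [← hSapp] using hdecomp x
    obtain ⟨C, hC⟩ := h1.bddAbove_range
    exact ⟨C, fun n => hC (Set.mem_range_self n)⟩
  have hC0 : (0 : ℝ) ≤ C := le_trans (norm_nonneg _) (hC 0)
  -- idempotence of the `P j`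
  have hidem : ∀ j x, P j (P j x) = P j x := by
    intro j x
    have h1 : Tendsto (fun n => ∑ i ∈ Finset.range n, P i (P j x)) atTop (𝓝 (P j x)) :=
      hdecomp (P j x)
    have h2 : ∀ n, n ≥ j + 1 → ∑ i ∈ Finset.range n, P i (P j x) = P j (P j x) := by
      intro n hn
      rw [Finset.sum_eq_single j]
      · intro i _ hij
        calc P i (P j x) = ((P i).comp (P j)) x := rfl
        _ = 0 := by rw [horth i j hij]; rfl
      · intro h; exact absurd (Finset.mem_range.2 (by omega)) h
    have h3 : Tendsto (fun n => ∑ i ∈ Finset.range n, P i (P j x)) atTop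
        (𝓝 (P j (P j x))) := by
      refine Tendsto.congr' ?_ tendsto_const_nhds
      filter_upwards [eventually_ge_atTop (j + 1)] with n hn
      exact (h2 n hn).symm
    exact tendsto_nhds_unique h3 h1
  -- `S m ∘ S n = S m` for `m ≤ n`
  have hSS : ∀ m n, m ≤ n → (S m).comp (S n) = S m := by
    intro m n hmn
    ext x
    simp only [ContinuousLinearMap.comp_apply, hSapp, map_sum]
    refine Finset.sum_congr rfl ?_
    intro i hi
    rw [Finset.sum_eq_single i]
    · exact hidem i x
    · intro j _ hji
      calc P i (P j x) = ((P i).comp (P j)) x := rfl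
      _ = 0 := by rw [horth i j hji.symm]; rfl
    · intro h
      exact absurd (Finset.mem_range.2 (lt_of_lt_of_le (Finset.mem_range.1 hi) hmn)) h
  -- the adjoint partial sums, applied to `f`
  set Q : ℕ → X →L[ℝ] ℝ := fun n => f.comp (S n) with hQ
  -- weak* convergence `Q n → f`
  have hws : WeakStarConv X Q f := by
    intro x
    have := (f.continuous.tendsto x).comp (hdecomp x)
    refine this.congr ?_
    intro n
    simp [hQ, hSapp]
  -- Grothendieck: weak convergence
  have hw : WeakConv (X →L[ℝ] ℝ) Q f := hX Q f hws
  -- Mazur: `f` lies in the norm closure of the convex hull of `{Q n}`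
  have hmem : f ∈ closure (convexHull ℝ (Set.range Q)) := by
    by_contra hmemn
    obtain ⟨φ, u, hu1, hu2⟩ :=
      geometric_hahn_banach_closed_point
        ((convex_convexHull ℝ _).closure) isClosed_closure hmemn
    have hle : ∀ n, φ (Q n) ≤ u := fun n =>
      le_of_lt (hu1 _ (subset_closure (subset_convexHull ℝ _ (Set.mem_range_self n))))
    have : φ f ≤ u := le_of_tendsto (hw φ) (Eventually.of_forall hle)
    exact absurd hu2 (not_lt.2 this)
  -- convex hull elements are eventually fixed by the adjoint partial sums
  have hfix : ∀ g ∈ convexHull ℝ (Set.range Q), ∃ N, ∀ n ≥ N, g.comp (S n) = g := by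
    have hconv : Convex ℝ {g : X →L[ℝ] ℝ | ∃ N, ∀ n ≥ N, g.comp (S n) = g} := by
      intro g1 hg1 g2 hg2 a b _ _ _
      obtain ⟨N1, h1⟩ := hg1
      obtain ⟨N2, h2⟩ := hg2
      refine ⟨max N1 N2, fun n hn => ?_⟩
      rw [ContinuousLinearMap.add_comp, ContinuousLinearMap.smul_comp,
        ContinuousLinearMap.smul_comp, h1 n (le_trans (le_max_left _ _) hn),
        h2 n (le_trans (le_max_right _ _) hn)]
    refine fun g hg => convexHull_min ?_ hconv hg
    rintro _ ⟨m, rfl⟩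
    refine ⟨m, fun n hn => ?_⟩
    simp only [hQ, ContinuousLinearMap.comp_assoc]
    rw [hSS m n hn]
  -- conclude: norm convergence
  rw [Metric.tendsto_atTop]
  intro ε hε
  have hε4 : 0 < ε / (2 * (C + 1)) := by positivity
  obtain ⟨g, hg, hgd⟩ := Metric.mem_closure_iff.1 hmem _ hε4
  obtain ⟨N, hN⟩ := hfix g hg
  refine ⟨N, fun n hn => ?_⟩
  have hfg : ‖f - g‖ < ε / (2 * (C + 1)) := by
    rw [← dist_eq_norm]; exact hgd
  have key : f.comp (S n) - f = (f - g).comp (S n) + (g - f) := by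
    rw [ContinuousLinearMap.sub_comp, hN n hn]; abel
  have hb1 : ‖(f - g).comp (S n)‖ ≤ ‖f - g‖ * C :=
    le_trans ((f - g).opNorm_comp_le (S n))
      (mul_le_mul_of_nonneg_left (hC n) (norm_nonneg _))
  calc dist (f.comp (S n)) f = ‖f.comp (S n) - f‖ := dist_eq_norm _ _
    _ = ‖(f - g).comp (S n) + (g - f)‖ := by rw [key]
    _ ≤ ‖(f - g).comp (S n)‖ + ‖g - f‖ := norm_add_le _ _
    _ ≤ ‖f - g‖ * C + ‖f - g‖ := by
        rw [norm_sub_rev g f]; exact add_le_add hb1 le_rfl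
    _ = ‖f - g‖ * (C + 1) := by ring
    _ < ε / (2 * (C + 1)) * (C + 1) :=
        mul_lt_mul_of_pos_right hfg (by positivity)
    _ ≤ ε / 2 := by
        rw [div_mul_eq_mul_div, mul_comm 2 (C + 1), ← div_div, mul_div_assoc]
        rw [div_self (by positivity : C + 1 ≠ 0), mul_one]
    _ < ε := by linarith
end

section
/- A Grothendieck Banach space with the Dunford–Pettis property admits no Schauder decomposition. -/
open Filter Topology ZeroAtInfty

/-- `X` has the Dunford–Pettis property: weakly compact operators from `X` take weakly
convergent sequences to norm convergent sequences. -/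
def DunfordPettis (X : Type*) [SeminormedAddCommGroup X] [NormedSpace ℝ X] : Prop :=
  ∀ (Y : Type) [NormedAddCommGroup Y] [NormedSpace ℝ Y] [CompleteSpace Y]
    (T : X →L[ℝ] Y), IsWeaklyCompactOp T →
      ∀ (x : ℕ → X) (x₀ : X), WeakConv X x x₀ →
        Tendsto (fun n => T (x n)) atTop (𝓝 (T x₀))


noncomputable section NoSchauderAux

namespace NoSchauder

/-- Build an element of `C₀(ℕ, ℝ)` from a null sequence. -/
def c0Mk (y : ℕ → ℝ) (hy : Tendsto y atTop (𝓝 0)) : C₀(ℕ, ℝ) :=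
  ⟨⟨y, continuous_of_discreteTopology⟩, by rwa [cocompact_eq_atTop]⟩

@[simp] lemma c0Mk_apply (y : ℕ → ℝ) (hy : Tendsto y atTop (𝓝 0)) (n : ℕ) :
    c0Mk y hy n = y n := rfl

lemma c0_tendsto (f : C₀(ℕ, ℝ)) : Tendsto (fun n => f n) atTop (𝓝 0) := by
  have h := zero_at_infty (f : C₀(ℕ, ℝ))
  rwa [cocompact_eq_atTop] at h

lemma c0_abs_le_norm (y : C₀(ℕ, ℝ)) (m : ℕ) : |y m| ≤ ‖y‖ := by
  have h := BoundedContinuousFunction.norm_coe_le_norm y.toBCF m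
  rw [ZeroAtInftyContinuousMap.norm_toBCF_eq_norm] at h
  simpa [Real.norm_eq_abs] using h

lemma c0_norm_le (y : C₀(ℕ, ℝ)) {M : ℝ} (hM : 0 ≤ M) (h : ∀ n, |y n| ≤ M) : ‖y‖ ≤ M := by
  rw [← ZeroAtInftyContinuousMap.norm_toBCF_eq_norm]
  exact (BoundedContinuousFunction.norm_le hM).2 fun n => by
    simpa [Real.norm_eq_abs] using h n

/-- The `n`-th coordinate vector in `C₀(ℕ, ℝ)`. -/
def e (n : ℕ) : C₀(ℕ, ℝ) :=
  c0Mk (fun m => if m = n then (1 : ℝ) else 0)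
    (by
      have h : ∀ᶠ m in atTop, (0 : ℝ) = if m = n then (1 : ℝ) else 0 := by
        filter_upwards [eventually_gt_atTop n] with m hm
        simp [hm.ne']
      exact Tendsto.congr' h tendsto_const_nhds)

@[simp] lemma e_apply (n m : ℕ) : e n m = if m = n then (1 : ℝ) else 0 := rfl

lemma c0_sum_apply {ι : Type*} (s : Finset ι) (f : ι → C₀(ℕ, ℝ)) (m : ℕ) :
    (∑ i ∈ s, f i) m = ∑ i ∈ s, f i m := by
  classical
  induction s using Finset.induction_on with
  | empty => simp
  | insert _ _ hnot ih =>
      rw [Finset.sum_insert hnot, Finset.sum_insert hnot,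
        ZeroAtInftyContinuousMap.add_apply, ih]

/-- Truncations converge in norm. -/
lemma tendsto_trunc (y : C₀(ℕ, ℝ)) :
    Tendsto (fun N => ∑ n ∈ Finset.range N, y n • e n) atTop (𝓝 y) := by
  rw [Metric.tendsto_atTop]
  intro ε hε
  obtain ⟨N₀, hN₀⟩ := (Metric.tendsto_atTop.1 (c0_tendsto y)) (ε / 2) (by positivity)
  refine ⟨N₀, fun N hN => ?_⟩
  have happ : ∀ m, (∑ n ∈ Finset.range N, y n • e n) m = if m ∈ Finset.range N then y m else 0 := by
    intro m
    rw [c0_sum_apply]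
    have : ∀ n ∈ Finset.range N, (y n • e n) m = if m = n then y n else 0 := by
      intro n _
      rw [ZeroAtInftyContinuousMap.smul_apply, e_apply]
      simp [smul_eq_mul, mul_ite]
    rw [Finset.sum_congr rfl this, Finset.sum_ite_eq]
  have hle : ‖(∑ n ∈ Finset.range N, y n • e n) - y‖ ≤ ε / 2 := by
    apply c0_norm_le _ (by positivity)
    intro m
    rw [ZeroAtInftyContinuousMap.sub_apply, happ]
    by_cases hm : m ∈ Finset.range N
    · simp [hm]; positivity
    · rw [if_neg hm, zero_sub, abs_neg]
      have hmN : N ≤ m := by simpa using hm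
      have := hN₀ m (le_trans hN hmN)
      rw [Real.dist_eq, sub_zero] at this
      exact this.le
  have : dist (∑ n ∈ Finset.range N, y n • e n) y ≤ ε / 2 := by
    rw [dist_eq_norm]; exact hle
  linarith

/-- Representation of continuous functionals on `C₀(ℕ, ℝ)` as absolutely convergent series. -/
lemma dual_rep (ψ : C₀(ℕ, ℝ) →L[ℝ] ℝ) :
    Summable (fun n => |ψ (e n)|) ∧ ∀ y : C₀(ℕ, ℝ), HasSum (fun n => ψ (e n) * y n) (ψ y) := by
  classical
  have habs : ∀ s : Finset ℕ, ∑ n ∈ s, |ψ (e n)| ≤ ‖ψ‖ := by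
    intro s
    set c : ℕ → ℝ := fun n => if ψ (e n) < 0 then (-1 : ℝ) else 1 with hc
    set z : C₀(ℕ, ℝ) := ∑ n ∈ s, c n • e n with hz
    have hzapp : ∀ m, z m = if m ∈ s then c m else 0 := by
      intro m
      rw [hz, c0_sum_apply]
      have : ∀ n ∈ s, (c n • e n) m = if m = n then c n else 0 := by
        intro n _
        rw [ZeroAtInftyContinuousMap.smul_apply, e_apply]
        simp [smul_eq_mul, mul_ite]
      rw [Finset.sum_congr rfl this, Finset.sum_ite_eq]
    have hznorm : ‖z‖ ≤ 1 := by
      apply c0_norm_le _ zero_le_one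
      intro m
      rw [hzapp]
      by_cases hm : m ∈ s
      · simp only [hm, if_pos, hc]
        split_ifs <;> norm_num
      · simp [hm]
    have hψz : ψ z = ∑ n ∈ s, |ψ (e n)| := by
      rw [hz, map_sum]
      refine Finset.sum_congr rfl fun n _ => ?_
      rw [map_smul, smul_eq_mul, hc]
      simp only
      by_cases hn : ψ (e n) < 0
      · rw [if_pos hn, abs_of_neg hn]; ring
      · rw [if_neg hn, one_mul, abs_of_nonneg (not_lt.1 hn)]
    calc ∑ n ∈ s, |ψ (e n)| = ψ z := hψz.symm
      _ ≤ |ψ z| := le_abs_self _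
      _ = ‖ψ z‖ := (Real.norm_eq_abs _).symm
      _ ≤ ‖ψ‖ * ‖z‖ := ψ.le_opNorm z
      _ ≤ ‖ψ‖ * 1 := mul_le_mul_of_nonneg_left hznorm ψ.opNorm_nonneg
      _ = ‖ψ‖ := mul_one _
  have hsum : Summable (fun n => |ψ (e n)|) :=
    summable_of_sum_range_le (fun n => abs_nonneg _) (fun n => habs _)
  refine ⟨hsum, fun y => ?_⟩
  have hsum2 : Summable (fun n => ψ (e n) * y n) := by
    refine Summable.of_norm_bounded (g := fun n => |ψ (e n)| * ‖y‖) (hsum.mul_right ‖y‖) fun n => ?_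
    rw [Real.norm_eq_abs, abs_mul]
    exact mul_le_mul_of_nonneg_left (c0_abs_le_norm y n) (abs_nonneg _)
  have hpart : ∀ N, ∑ n ∈ Finset.range N, ψ (e n) * y n = ψ (∑ n ∈ Finset.range N, y n • e n) := by
    intro N
    rw [map_sum]
    exact Finset.sum_congr rfl fun n _ => by rw [map_smul, smul_eq_mul, mul_comm]
  have hpartial : Tendsto (fun N => ∑ n ∈ Finset.range N, ψ (e n) * y n) atTop (𝓝 (ψ y)) := by
    simp only [hpart]
    exact (ψ.continuous.tendsto y).comp (tendsto_trunc y)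
  have h2 := hsum2.hasSum.tendsto_sum_nat
  have heq : (∑' n, ψ (e n) * y n) = ψ y := tendsto_nhds_unique h2 hpartial
  rw [← heq]
  exact hsum2.hasSum

/-- Evaluation at a coordinate as a continuous linear functional on `C₀(ℕ, ℝ)`. -/
def coordCLM (m : ℕ) : C₀(ℕ, ℝ) →L[ℝ] ℝ :=
  LinearMap.mkContinuous
    { toFun := fun y => y m
      map_add' := fun y z => by simp [ZeroAtInftyContinuousMap.add_apply]
      map_smul' := fun c y => by simp [ZeroAtInftyContinuousMap.smul_apply] }
    1 (fun y => by simpa [Real.norm_eq_abs] using c0_abs_le_norm y m)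

@[simp] lemma coordCLM_apply (m : ℕ) (y : C₀(ℕ, ℝ)) : coordCLM m y = y m := rfl

lemma weak_t2_c0 : @T2Space C₀(ℕ, ℝ) (weakTopology C₀(ℕ, ℝ)) := by
  have hinj : Function.Injective
      (fun (y : C₀(ℕ, ℝ)) => fun ψ : C₀(ℕ, ℝ) →L[ℝ] ℝ => ψ y) := by
    intro y z h
    ext m
    simpa using congrFun h (coordCLM m)
  exact @T2Space.of_injective_continuous _ _ (weakTopology C₀(ℕ, ℝ)) _ _ _ hinj
    continuous_induced_dom

lemma compact_closure_helper {Y : Type*} [tw : TopologicalSpace Y] [T2Space Y]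
    {W S : Set Y} (hW : IsCompact W) (hS : S ⊆ W) : IsCompact (closure S) :=
  hW.of_isClosed_subset isClosed_closure (closure_minimal hS hW.isClosed)

variable {X : Type*} [NormedAddCommGroup X] [NormedSpace ℝ X]

/-- The operator `v ↦ (fₙ v)ₙ` into `C₀(ℕ, ℝ)`. -/
def Tmk (f : ℕ → X →L[ℝ] ℝ) (M : ℝ) (hM0 : 0 ≤ M) (hM : ∀ n, ‖f n‖ ≤ M)
    (h0 : ∀ v : X, Tendsto (fun n => f n v) atTop (𝓝 0)) : X →L[ℝ] C₀(ℕ, ℝ) :=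
  LinearMap.mkContinuous
    { toFun := fun v => c0Mk (fun n => f n v) (h0 v)
      map_add' := fun v w => by
        ext n
        simp [c0Mk_apply, ZeroAtInftyContinuousMap.add_apply]
      map_smul' := fun c v => by
        ext n
        simp [c0Mk_apply, ZeroAtInftyContinuousMap.smul_apply] }
    M (fun v => by
      apply c0_norm_le _ (mul_nonneg hM0 (norm_nonneg v))
      intro n
      show |c0Mk (fun n => (f n) v) (h0 v) n| ≤ M * ‖v‖
      rw [c0Mk_apply]
      calc |f n v| ≤ ‖f n‖ * ‖v‖ := (f n).le_opNorm v
        _ ≤ M * ‖v‖ := mul_le_mul_of_nonneg_right (hM n) (norm_nonneg v))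

lemma Tmk_apply (f : ℕ → X →L[ℝ] ℝ) (M : ℝ) (hM0 : 0 ≤ M) (hM : ∀ n, ‖f n‖ ≤ M)
    (h0 : ∀ v : X, Tendsto (fun n => f n v) atTop (𝓝 0)) (v : X) (n : ℕ) :
    Tmk f M hM0 hM h0 v n = f n v := rfl

/-- The key weak compactness statement: if the rows `fₙ` are weakly null
(tested against all functionals on the dual), then `Tmk f` is weakly compact. -/
theorem isWeaklyCompact_T (f : ℕ → X →L[ℝ] ℝ) (M : ℝ) (hM0 : 0 ≤ M) (hM : ∀ n, ‖f n‖ ≤ M)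
    (h0 : ∀ v : X, Tendsto (fun n => f n v) atTop (𝓝 0))
    (hnull : ∀ F : (X →L[ℝ] ℝ) →L[ℝ] ℝ, Tendsto (fun n => F (f n)) atTop (𝓝 0)) :
    IsWeaklyCompactOp (Tmk f M hM0 hM h0) := by
  classical
  set T := Tmk f M hM0 hM h0 with hT
  set S : Set (WeakDual ℝ (X →L[ℝ] ℝ)) :=
    WeakDual.toStrongDual ⁻¹' Metric.closedBall 0 1 with hSdef
  have hScomp : IsCompact S := WeakDual.isCompact_closedBall (𝕜 := ℝ) (E := X →L[ℝ] ℝ) 0 1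
  set Φ : WeakDual ℝ (X →L[ℝ] ℝ) → C₀(ℕ, ℝ) :=
    fun F => c0Mk (fun n => F (f n)) (hnull (WeakDual.toStrongDual F)) with hΦdef
  -- continuity of `ψ ∘ Φ` on `S` for every functional `ψ`
  have hcont : ∀ ψ : C₀(ℕ, ℝ) →L[ℝ] ℝ, Continuous (fun F : S => ψ (Φ F.1)) := by
    intro ψ
    obtain ⟨hsum, hrep⟩ := dual_rep ψ
    set a : ℕ → ℝ := fun n => ψ (e n) with ha
    have hpc : ∀ N, Continuous (fun F : S => ∑ n ∈ Finset.range N, a n * F.1 (f n)) := by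
      intro N
      apply continuous_finset_sum
      intro n _
      exact continuous_const.mul ((WeakDual.eval_continuous (f n)).comp continuous_subtype_val)
    set A : ℝ := ∑' n, |a n| with hA
    have htail : Tendsto (fun N => M * (A - ∑ n ∈ Finset.range N, |a n|)) atTop (𝓝 0) := by
      have h1 := hsum.hasSum.tendsto_sum_nat
      have h2 : Tendsto (fun N => A - ∑ n ∈ Finset.range N, |a n|) atTop (𝓝 0) := by
        have := tendsto_const_nhds (x := A) (f := atTop (α := ℕ)) |>.sub h1
        convert this using 2
        exact (sub_self _).symm
      simpa using h2.const_mul M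
    have hbound : ∀ (N : ℕ) (F : S),
        |ψ (Φ F.1) - ∑ n ∈ Finset.range N, a n * F.1 (f n)|
          ≤ M * (A - ∑ n ∈ Finset.range N, |a n|) := by
      rintro N ⟨F, hF⟩
      have hFnorm : ‖WeakDual.toStrongDual F‖ ≤ 1 := by
        have := hF
        rw [Set.mem_preimage, Metric.mem_closedBall] at this
        exact (dist_zero_right (WeakDual.toStrongDual F)).symm.trans_le this
      have hterm : ∀ n, |F (f n)| ≤ M := by
        intro n
        calc |F (f n)| ≤ ‖WeakDual.toStrongDual F‖ * ‖f n‖ :=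
              (WeakDual.toStrongDual F).le_opNorm (f n)
          _ ≤ 1 * M := mul_le_mul hFnorm (hM n) (norm_nonneg _) zero_le_one
          _ = M := one_mul M
      have hps : Tendsto (fun K => ∑ n ∈ Finset.range K, a n * F (f n)) atTop (𝓝 (ψ (Φ F))) := by
        have h3 := (hrep (Φ F)).tendsto_sum_nat
        have h4 : ∀ n, Φ F n = F (f n) := fun n => c0Mk_apply _ _ n
        simpa [h4] using h3
      have key : ∀ K, N ≤ K →
          |∑ n ∈ Finset.range K, a n * F (f n) - ∑ n ∈ Finset.range N, a n * F (f n)|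
            ≤ M * (A - ∑ n ∈ Finset.range N, |a n|) := by
        intro K hK
        rw [← Finset.sum_Ico_eq_sub _ hK]
        have hIco : |∑ n ∈ Finset.Ico N K, a n * F (f n)|
            ≤ ∑ n ∈ Finset.Ico N K, |a n| * M := by
          refine le_trans (Finset.abs_sum_le_sum_abs _ _) (Finset.sum_le_sum fun n _ => ?_)
          rw [abs_mul]
          exact mul_le_mul_of_nonneg_left (hterm n) (abs_nonneg _)
        have hIco2 : ∑ n ∈ Finset.Ico N K, |a n|
            ≤ A - ∑ n ∈ Finset.range N, |a n| := by
          have h5 : ∑ n ∈ Finset.Ico N K, |a n|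
              = ∑ n ∈ Finset.range K, |a n| - ∑ n ∈ Finset.range N, |a n| :=
            Finset.sum_Ico_eq_sub _ hK
          have h6 : ∑ n ∈ Finset.range K, |a n| ≤ A :=
            Summable.sum_le_tsum _ (fun n _ => abs_nonneg _) hsum
          linarith
        calc |∑ n ∈ Finset.Ico N K, a n * F (f n)|
            ≤ ∑ n ∈ Finset.Ico N K, |a n| * M := hIco
          _ = (∑ n ∈ Finset.Ico N K, |a n|) * M := by rw [Finset.sum_mul]
          _ ≤ (A - ∑ n ∈ Finset.range N, |a n|) * M := by
              apply mul_le_mul_of_nonneg_right hIco2 hM0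
          _ = M * (A - ∑ n ∈ Finset.range N, |a n|) := mul_comm _ _
      have hlim : Tendsto
          (fun K => |∑ n ∈ Finset.range K, a n * F (f n) - ∑ n ∈ Finset.range N, a n * F (f n)|)
          atTop (𝓝 |ψ (Φ F) - ∑ n ∈ Finset.range N, a n * F (f n)|) :=
        (hps.sub tendsto_const_nhds).abs
      exact le_of_tendsto hlim (eventually_atTop.2 ⟨N, key⟩)
    have hunif : TendstoUniformly
        (fun N (F : S) => ∑ n ∈ Finset.range N, a n * F.1 (f n))
        (fun F : S => ψ (Φ F.1)) atTop := by
      rw [Metric.tendstoUniformly_iff]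
      intro ε hε
      filter_upwards [htail.eventually (gt_mem_nhds hε)] with N hN F
      have h7 := hbound N F
      rw [Real.dist_eq]
      exact lt_of_le_of_lt h7 hN
    exact hunif.continuous (Frequently.of_forall hpc)
  -- the restriction of `Φ` to `S` is continuous into the weak topology
  have hrestr : @Continuous S C₀(ℕ, ℝ) _ (weakTopology C₀(ℕ, ℝ)) (fun F : S => Φ F.1) := by
    rw [weakTopology]
    rw [continuous_induced_rng]
    exact continuous_pi fun ψ => hcont ψ
  -- the image `Φ '' S` is weakly compact
  have hW : @IsCompact C₀(ℕ, ℝ) (weakTopology C₀(ℕ, ℝ)) (Φ '' S) := by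
    haveI : CompactSpace S := isCompact_iff_compactSpace.mp hScomp
    have himg : Φ '' S = Set.range (fun F : S => Φ F.1) := by
      rw [Set.image_eq_range]
    rw [himg]
    exact @isCompact_range _ _ _ (weakTopology C₀(ℕ, ℝ)) _ _ hrestr
  -- T maps the unit ball into Φ '' S
  have hsub : ⇑T '' Metric.closedBall 0 1 ⊆ Φ '' S := by
    rintro - ⟨v, hv, rfl⟩
    have hvnorm : ‖v‖ ≤ 1 := by
      rwa [Metric.mem_closedBall, dist_zero_right] at hv
    refine ⟨(StrongDual.toWeakDual (NormedSpace.inclusionInDoubleDual ℝ X v)), ?_, ?_⟩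
    · rw [hSdef, Set.mem_preimage, Metric.mem_closedBall]
      suffices ‖WeakDual.toStrongDual (StrongDual.toWeakDual (NormedSpace.inclusionInDoubleDual ℝ X v))‖ ≤ 1 by
        exact (dist_zero_right (WeakDual.toStrongDual (StrongDual.toWeakDual (NormedSpace.inclusionInDoubleDual ℝ X v)))).trans_le this
      calc ‖WeakDual.toStrongDual (StrongDual.toWeakDual (NormedSpace.inclusionInDoubleDual ℝ X v))‖
          = ‖NormedSpace.inclusionInDoubleDual ℝ X v‖ := rfl
        _ ≤ ‖v‖ :=
            NormedSpace.double_dual_bound ℝ X v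
        _ ≤ 1 * 1 := by
            rw [one_mul]; exact hvnorm
        _ = 1 := one_mul 1
    · ext n
      rw [hT, Tmk_apply]
      rfl
  -- conclude
  show @IsCompact C₀(ℕ, ℝ) (weakTopology C₀(ℕ, ℝ))
    (@closure C₀(ℕ, ℝ) (weakTopology C₀(ℕ, ℝ)) (⇑T '' Metric.closedBall 0 1))
  exact @compact_closure_helper _ (weakTopology C₀(ℕ, ℝ)) weak_t2_c0 _ _ hW hsub

end NoSchauder

end NoSchauderAux

open NoSchauder in
/-- A Grothendieck space with the Dunford–Pettis property admits no Schauder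
decomposition. -/
theorem no_schauderDecomposition_of_grothendieck_dunfordPettis (X : Type*)
    [NormedAddCommGroup X] [NormedSpace ℝ X] [CompleteSpace X]
    (hX : IsGrothendieck X) (hDP : DunfordPettis X) :
    ¬ ∃ P : ℕ → X →L[ℝ] X, (∀ i, P i ≠ 0) ∧
        (∀ i j, i ≠ j → (P i).comp (P j) = 0) ∧
        (∀ x : X, Tendsto (fun n => ∑ i ∈ Finset.range n, P i x) atTop (𝓝 x)) := by
  classical
  rintro ⟨P, hP0, horth, hconv⟩
  -- pointwise orthogonality
  have horth' : ∀ i j, i ≠ j → ∀ v, P i (P j v) = 0 := by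
    intro i j hij v
    have h := horth i j hij
    have h2 : ((P i).comp (P j)) v = (0 : X →L[ℝ] X) v := by rw [h]
    simpa using h2
  -- partial sum operators
  set Q : ℕ → X →L[ℝ] X := fun k => ∑ i ∈ Finset.range k, P i with hQdef
  have hQapp : ∀ k v, Q k v = ∑ i ∈ Finset.range k, P i v := by
    intro k v
    simp [hQdef, ContinuousLinearMap.sum_apply]
  have hQconv : ∀ v, Tendsto (fun k => Q k v) atTop (𝓝 v) := by
    intro v
    have := hconv v
    simpa [hQapp] using this
  -- uniform bound via Banach–Steinhaus
  obtain ⟨C, hC⟩ : ∃ C, ∀ k, ‖Q k‖ ≤ C := by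
    apply banach_steinhaus
    intro v
    have ht : Tendsto (fun k => ‖Q k v‖) atTop (𝓝 ‖v‖) := (hQconv v).norm
    obtain ⟨c, hc⟩ := ht.bddAbove_range
    exact ⟨c, fun k => hc (Set.mem_range_self k)⟩
  have hC0 : 0 ≤ C := le_trans (norm_nonneg _) (hC 0)
  -- terms of the decomposition tend to zero pointwise
  have hterm : ∀ v, Tendsto (fun k => P k v) atTop (𝓝 0) := by
    intro v
    have h1 : Tendsto (fun k => Q (k + 1) v - Q k v) atTop (𝓝 (v - v)) :=
      Tendsto.sub ((hQconv v).comp (tendsto_add_atTop_nat 1)) (hQconv v)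
    rw [sub_self] at h1
    apply h1.congr
    intro k
    rw [hQapp, hQapp, Finset.sum_range_succ]
    abel
  -- idempotency
  have hidem : ∀ i v, P i (P i v) = P i v := by
    intro i v
    have h2 : Tendsto (fun k => P i (∑ j ∈ Finset.range k, P j v)) atTop (𝓝 (P i v)) :=
      ((P i).continuous.tendsto v).comp (hconv v)
    have hev : ∀ᶠ k in atTop, P i (∑ j ∈ Finset.range k, P j v) = P i (P i v) := by
      filter_upwards [eventually_gt_atTop i] with k hk
      rw [map_sum]
      rw [Finset.sum_eq_single i]
      · intro j hj hji
        exact horth' i j (Ne.symm hji) v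
      · intro hi
        exact absurd (Finset.mem_range.2 hk) hi
    have h3 : Tendsto (fun k => P i (∑ j ∈ Finset.range k, P j v)) atTop (𝓝 (P i (P i v))) :=
      Tendsto.congr' (by filter_upwards [hev] with k hk using hk.symm) tendsto_const_nhds
    exact tendsto_nhds_unique h3 h2
  -- choose normalized vectors in the ranges
  have hex : ∀ i, ∃ v, P i v ≠ 0 := by
    intro i
    by_contra hcon
    push_neg at hcon
    exact hP0 i (ContinuousLinearMap.ext fun v => by rw [hcon v]; rfl)
  choose u hu using hex
  set x : ℕ → X := fun i => ‖P i (u i)‖⁻¹ • P i (u i) with hxdef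
  have hxnorm : ∀ i, ‖x i‖ = 1 := by
    intro i
    rw [hxdef]
    simp only [norm_smul, norm_inv, norm_norm]
    exact inv_mul_cancel₀ (norm_ne_zero_iff.2 (hu i))
  have hPx_self : ∀ i, P i (x i) = x i := by
    intro i
    rw [hxdef]
    simp only [map_smul]
    rw [hidem]
  have hPx_ne : ∀ i j, i ≠ j → P i (x j) = 0 := by
    intro i j hij
    rw [hxdef]
    simp only [map_smul]
    rw [horth' i j hij, smul_zero]
  have hQx : ∀ k j, k ≤ j → Q k (x j) = 0 := by
    intro k j hkj
    rw [hQapp]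
    apply Finset.sum_eq_zero
    intro i hi
    have hij : i ≠ j := by
      have := Finset.mem_range.1 hi
      omega
    exact hPx_ne i j hij
  by_cases hA : WeakConv X x 0
  · -- Case A : the normalized vectors are weakly null; use Dunford–Pettis
    have hxne : ∀ i, x i ≠ 0 := by
      intro i hi
      have := hxnorm i
      rw [hi, norm_zero] at this
      norm_num at this
    have hdual : ∀ i, ∃ g : X →L[ℝ] ℝ, ‖g‖ = 1 ∧ g (x i) = 1 := by
      intro i
      obtain ⟨g, hg1, hg2⟩ := exists_dual_vector ℝ (x i) (norm_ne_zero_iff.2 (hxne i))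
      refine ⟨g, hg1, ?_⟩
      rw [hg2, hxnorm i]
      norm_num
    choose f' hf1 hf2 using hdual
    set f : ℕ → X →L[ℝ] ℝ := fun i => (f' i).comp (P i) with hfdef
    have hfx : ∀ i, f i (x i) = 1 := by
      intro i
      rw [hfdef]
      simp only [ContinuousLinearMap.comp_apply]
      rw [hPx_self, hf2]
    have hPle : ∀ i, ‖P i‖ ≤ 2 * C := by
      intro i
      apply ContinuousLinearMap.opNorm_le_bound _ (by positivity)
      intro v
      have h1 : P i v = Q (i + 1) v - Q i v := by
        rw [hQapp, hQapp, Finset.sum_range_succ]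
        abel
      rw [h1]
      calc ‖Q (i + 1) v - Q i v‖ ≤ ‖Q (i + 1) v‖ + ‖Q i v‖ := norm_sub_le _ _
        _ ≤ C * ‖v‖ + C * ‖v‖ := by
            gcongr
            · exact le_trans ((Q (i+1)).le_opNorm v)
                (mul_le_mul_of_nonneg_right (hC (i+1)) (norm_nonneg v))
            · exact le_trans ((Q i).le_opNorm v)
                (mul_le_mul_of_nonneg_right (hC i) (norm_nonneg v))
        _ = 2 * C * ‖v‖ := by ring
    have hfM : ∀ i, ‖f i‖ ≤ 2 * C := by
      intro i
      rw [hfdef]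
      calc ‖(f' i).comp (P i)‖ ≤ ‖f' i‖ * ‖P i‖ := ContinuousLinearMap.opNorm_comp_le _ _
        _ = ‖P i‖ := by rw [hf1, one_mul]
        _ ≤ 2 * C := hPle i
    have h0 : ∀ v : X, Tendsto (fun i => f i v) atTop (𝓝 0) := by
      intro v
      apply squeeze_zero_norm _ (show Tendsto (fun i => ‖P i v‖) atTop (𝓝 0) by
        simpa using (hterm v).norm)
      intro i
      rw [hfdef]
      simp only [ContinuousLinearMap.comp_apply]
      calc ‖f' i (P i v)‖ ≤ ‖f' i‖ * ‖P i v‖ := (f' i).le_opNorm _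
        _ = ‖P i v‖ := by rw [hf1, one_mul]
    have hstar : WeakStarConv X f 0 := by
      intro v
      simpa using h0 v
    have hFnull : ∀ F : (X →L[ℝ] ℝ) →L[ℝ] ℝ, Tendsto (fun i => F (f i)) atTop (𝓝 0) := by
      intro F
      have := hX f 0 hstar F
      simpa using this
    set T := Tmk f (2 * C) (by positivity) hfM h0 with hTdef
    have hwc : IsWeaklyCompactOp T := isWeaklyCompact_T f (2 * C) (by positivity) hfM h0 hFnull
    have hdp := hDP (C₀(ℕ, ℝ)) T hwc x 0 hA
    rw [map_zero] at hdp
    have hnorm : Tendsto (fun i => ‖T (x i)‖) atTop (𝓝 0) := by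
      simpa using hdp.norm
    have hge : ∀ i, (1 : ℝ) ≤ ‖T (x i)‖ := by
      intro i
      have h1 : T (x i) i = 1 := by
        rw [hTdef, Tmk_apply, hfx]
      calc (1 : ℝ) = |T (x i) i| := by rw [h1]; norm_num
        _ ≤ ‖T (x i)‖ := c0_abs_le_norm _ i
    have : (1 : ℝ) ≤ 0 := ge_of_tendsto hnorm (Eventually.of_forall hge)
    linarith
  · -- Case B : the vectors are not weakly null; contradict the Grothendieck property
    rw [WeakConv] at hA
    push_neg at hA
    obtain ⟨g, hg⟩ := hA
    rw [map_zero] at hg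
    obtain ⟨ε, hε, hfr⟩ : ∃ ε > 0, ∃ᶠ m in atTop, ε ≤ |g (x m)| := by
      by_contra hcon
      push_neg at hcon
      apply hg
      rw [NormedAddCommGroup.tendsto_nhds_zero]
      intro ε hε
      have h1 := hcon ε hε
      filter_upwards [h1] with m hm
      rw [Real.norm_eq_abs]
      exact hm
    obtain ⟨n, hmono, hgε⟩ := Filter.extraction_of_frequently_atTop hfr
    -- ultrafilter limit along the subsequence, as a functional on the dual
    set U : Ultrafilter ℕ := Filter.hyperfilter ℕ with hU
    have hex2 : ∀ g' : X →L[ℝ] ℝ, ∃ L, Tendsto (fun j => g' (x (n j))) ↑U (𝓝 L) := by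
      intro g'
      have hmem : ∀ j, g' (x (n j)) ∈ Set.Icc (-‖g'‖) ‖g'‖ := by
        intro j
        have h1 : ‖g' (x (n j))‖ ≤ ‖g'‖ := by
          calc ‖g' (x (n j))‖ ≤ ‖g'‖ * ‖x (n j)‖ := g'.le_opNorm _
            _ = ‖g'‖ := by rw [hxnorm, mul_one]
        rw [Real.norm_eq_abs] at h1
        exact abs_le.1 h1
      have hle : ↑(U.map (fun j => g' (x (n j)))) ≤ 𝓟 (Set.Icc (-‖g'‖) ‖g'‖) := by
        rw [Filter.le_principal_iff]
        rw [Ultrafilter.coe_map, Filter.mem_map]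
        have : (fun j => g' (x (n j))) ⁻¹' Set.Icc (-‖g'‖) ‖g'‖ = Set.univ :=
          Set.eq_univ_of_forall fun j => hmem j
        rw [this]
        exact Filter.univ_mem
      obtain ⟨L, -, hL⟩ := isCompact_Icc.ultrafilter_le_nhds (U.map _) hle
      refine ⟨L, ?_⟩
      rwa [Filter.Tendsto, ← Ultrafilter.coe_map]
    choose lim hlim using hex2
    have lim_bound : ∀ g', |lim g'| ≤ ‖g'‖ := by
      intro g'
      apply le_of_tendsto (hlim g').abs
      apply Eventually.of_forall
      intro j
      calc |g' (x (n j))| ≤ ‖g'‖ * ‖x (n j)‖ := by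
            rw [← Real.norm_eq_abs]; exact g'.le_opNorm _
        _ = ‖g'‖ := by rw [hxnorm, mul_one]
    set Φ : (X →L[ℝ] ℝ) →L[ℝ] ℝ := LinearMap.mkContinuous
      { toFun := lim
        map_add' := fun g₁ g₂ => by
          refine tendsto_nhds_unique (hlim (g₁ + g₂)) ?_
          have := (hlim g₁).add (hlim g₂)
          simpa [ContinuousLinearMap.add_apply] using this
        map_smul' := fun c g₁ => by
          refine tendsto_nhds_unique (hlim (c • g₁)) ?_
          have := (hlim g₁).const_mul c
          simpa [ContinuousLinearMap.smul_apply, smul_eq_mul] using this }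
      1 (fun g' => by simpa [Real.norm_eq_abs] using lim_bound g') with hΦdef
    have hΦapp : ∀ g', Φ g' = lim g' := fun g' => rfl
    -- the weak* null sequence
    set h : ℕ → X →L[ℝ] ℝ := fun k => g.comp (ContinuousLinearMap.id ℝ X - Q k) with hhdef
    have hstar : WeakStarConv X h 0 := by
      intro v
      have h1 : Tendsto (fun k => v - Q k v) atTop (𝓝 0) := by
        have := Tendsto.sub (tendsto_const_nhds (x := v) (f := atTop (α := ℕ))) (hQconv v)
        simpa using this
      have h2 : Tendsto (fun k => g (v - Q k v)) atTop (𝓝 (g 0)) :=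
        (g.continuous.tendsto 0).comp h1
      rw [map_zero] at h2
      simpa [hhdef, ContinuousLinearMap.comp_apply, ContinuousLinearMap.sub_apply] using h2
    have hweak := hX h 0 hstar Φ
    rw [map_zero] at hweak
    -- but Φ (h k) is the constant lim g
    have hconst : ∀ k, Φ (h k) = lim g := by
      intro k
      rw [hΦapp]
      refine tendsto_nhds_unique (hlim (h k)) ?_
      refine Tendsto.congr' ?_ (hlim g)
      have hcof : ∀ᶠ j in cofinite, g (x (n j)) = h k (x (n j)) := by
        rw [Nat.cofinite_eq_atTop]
        filter_upwards [eventually_ge_atTop k] with j hj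
        have hkn : k ≤ n j := le_trans hj (hmono.le_apply)
        have hQ0 : Q k (x (n j)) = 0 := hQx k (n j) hkn
        rw [hhdef]
        simp [ContinuousLinearMap.comp_apply, ContinuousLinearMap.sub_apply, hQ0]
      exact hcof.filter_mono (Filter.hyperfilter_le_cofinite)
    have hlimg0 : lim g = 0 := by
      apply tendsto_nhds_unique (l := atTop (α := ℕ)) _ hweak
      · exact Tendsto.congr (fun k => (hconst k).symm) tendsto_const_nhds
    have hεle : ε ≤ |lim g| := by
      apply ge_of_tendsto (hlim g).abs
      exact Eventually.of_forall fun j => hgε j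
    rw [hlimg0] at hεle
    simp at hεle
    linarith
end

section
/- If X is a Grothendieck Banach space and M is a closed subspace of X such that X/M is separable, then M is a Grothendieck space. -/
open Filter Topology ZeroAtInfty

set_option maxHeartbeats 1600000

/-- A cluster value of a sequence converging to `b` equals `b`. -/
lemma mapClusterPt_eq_of_tendsto' {α β : Type*} [TopologicalSpace β] [T2Space β]
    {l : Filter α} [l.NeBot] {u : α → β} {a b : β}
    (h : MapClusterPt a l u) (h' : Filter.Tendsto u l (𝓝 b)) : a = b :=
  eq_of_nhds_neBot (h.clusterPt.mono h')

/-- Sequential Sobczyk: a weak*-null sequence of functionals on a subspace `M` of `X`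
with `X/M` separable admits weak*-null extensions to `X`. -/
lemma sobczyk_seq (X : Type*) [NormedAddCommGroup X] [NormedSpace ℝ X] [CompleteSpace X]
    (M : Submodule ℝ X)
    (hsep : TopologicalSpace.SeparableSpace (X ⧸ M))
    (h : ℕ → M →L[ℝ] ℝ) (K : ℝ) (hK0 : 0 ≤ K) (hK : ∀ n, ‖h n‖ ≤ K)
    (hnull : ∀ m : M, Filter.Tendsto (fun n => h n m) atTop (𝓝 0)) :
    ∃ H : ℕ → X →L[ℝ] ℝ, (∀ n (m : M), H n m = h n m) ∧
      ∀ x : X, Filter.Tendsto (fun n => H n x) atTop (𝓝 0) := by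
  classical
  -- Hahn-Banach extensions
  choose H' hH'ext hH'norm using fun n => exists_extension_norm_eq M (h n)
  have hH'K : ∀ n, ‖H' n‖ ≤ K := fun n => (hH'norm n).symm ▸ hK n
  -- dense sequence in the quotient, with lifts
  obtain ⟨u, hu⟩ := TopologicalSpace.exists_dense_seq (X ⧸ M)
  choose y hy using fun k => Submodule.Quotient.mk_surjective M (u k)
  -- weights
  set w : ℕ → ℝ := fun k => (1/2 : ℝ)^k / (1 + ‖y k‖) with hwdef
  have hwpos : ∀ k, 0 < w k := fun k => by
    have : (0:ℝ) < 1 + ‖y k‖ := by positivity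
    positivity
  have hwy : ∀ k, w k * ‖y k‖ ≤ (1/2 : ℝ)^k := fun k => by
    have h1 : (0:ℝ) < 1 + ‖y k‖ := by positivity
    rw [hwdef]
    rw [div_mul_eq_mul_div, div_le_iff₀ h1]
    nlinarith [norm_nonneg (y k), pow_pos (by norm_num : (0:ℝ) < 1/2) k]
  have hwle : ∀ k, w k ≤ (1/2 : ℝ)^k := fun k => by
    have h1 : (0:ℝ) < 1 + ‖y k‖ := by positivity
    rw [hwdef]
    rw [div_le_iff₀ h1]
    nlinarith [norm_nonneg (y k), pow_pos (by norm_num : (0:ℝ) < 1/2) k]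
  have hwone : ∀ k, w k ≤ 1 := fun k => le_trans (hwle k) (by
    calc ((1:ℝ)/2)^k ≤ 1^k := by gcongr <;> norm_num
    _ = 1 := one_pow k)
  -- the auxiliary "distance" functional
  have hterm : ∀ (F : X →L[ℝ] ℝ) k, w k * |F (y k)| ≤ (1/2 : ℝ)^k * ‖F‖ := by
    intro F k
    have h1 : |F (y k)| ≤ ‖F‖ * ‖y k‖ := by
      simpa [Real.norm_eq_abs] using (F.le_opNorm (y k))
    calc w k * |F (y k)| ≤ w k * (‖F‖ * ‖y k‖) := by
          have := (hwpos k).le; gcongr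
      _ = ‖F‖ * (w k * ‖y k‖) := by ring
      _ ≤ ‖F‖ * (1/2 : ℝ)^k := mul_le_mul_of_nonneg_left (hwy k) (norm_nonneg F)
      _ = (1/2 : ℝ)^k * ‖F‖ := by ring
  have hsumm : ∀ F : X →L[ℝ] ℝ, Summable (fun k => w k * |F (y k)|) := by
    intro F
    apply Summable.of_nonneg_of_le (fun k => by positivity) (hterm F)
    exact (summable_geometric_two).mul_right _
  set d : (X →L[ℝ] ℝ) → ℝ := fun F => ∑' k, w k * |F (y k)| with hddef
  have hd0 : ∀ F, 0 ≤ d F := fun F => tsum_nonneg (fun k => by positivity)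
  have hdterm : ∀ (F : X →L[ℝ] ℝ) k, w k * |F (y k)| ≤ d F := fun F k =>
    Summable.le_tsum (hsumm F) k (fun j _ => by positivity)
  -- main compactness claim
  have claim : ∀ ε > (0:ℝ), ∀ᶠ n in atTop, ∃ G : X →L[ℝ] ℝ,
      ‖G‖ ≤ K ∧ (∀ m : M, G m = 0) ∧ d (H' n - G) < ε := by
    intro ε hε
    by_contra hcon
    rw [Filter.not_eventually] at hcon
    set bad : Set ℕ := {n | ¬ ∃ G : X →L[ℝ] ℝ, ‖G‖ ≤ K ∧ (∀ m : M, G m = 0) ∧ d (H' n - G) < ε}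
      with hbad
    have hNe : (atTop ⊓ Filter.principal bad).NeBot := frequently_iff_neBot.mp hcon
    set l := atTop ⊓ Filter.principal bad with hl
    set v : ℕ → WeakDual ℝ X := fun n => StrongDual.toWeakDual (H' n) with hv
    have hcomp := WeakDual.isCompact_closedBall (𝕜 := ℝ) (0 : StrongDual ℝ X) K
    have hmaple : Filter.map v l ≤ Filter.principal (⇑WeakDual.toStrongDual ⁻¹' Metric.closedBall 0 K) := by
      refine Filter.le_principal_iff.mpr (Filter.mem_map.mpr (Filter.univ_mem' ?_))
      intro n
      simp only [Set.mem_preimage, Metric.mem_closedBall, dist_zero_right]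
      exact hH'K n
    obtain ⟨F, hFmem, hFcl⟩ := hcomp.exists_mapClusterPt (f := l) (u := v) hmaple
    -- the cluster point vanishes on M
    have hFM : ∀ m : M, F (m : X) = 0 := by
      intro m
      have hc : MapClusterPt (F (m : X)) l (fun n => v n (m : X)) :=
        hFcl.continuousAt_comp ((WeakDual.eval_continuous (𝕜 := ℝ) (m : X)).continuousAt)
      have ht : Filter.Tendsto (fun n => v n (m : X)) l (𝓝 0) := by
        have : Filter.Tendsto (fun n => H' n (m : X)) atTop (𝓝 0) := by
          have := hnull m
          simpa [hH'ext] using this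
        exact this.mono_left inf_le_left
      exact mapClusterPt_eq_of_tendsto' hc ht
    have hFK : ‖WeakDual.toStrongDual F‖ ≤ K := by
      simpa [Metric.mem_closedBall, dist_zero_right] using hFmem
    set F₀ : X →L[ℝ] ℝ := WeakDual.toStrongDual F with hF₀
    -- pick N with small geometric tail
    have htail := (tendsto_tsum_compl_atTop_zero (fun k : ℕ => (1/2 : ℝ)^k)).comp
      tendsto_finset_range
    have hKd : (0:ℝ) < ε / (2 * (2*K+1)) := by positivity
    obtain ⟨N, hN⟩ := ((tendsto_order.1 htail).2 _ hKd).exists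
    set ε' : ℝ := ε / (2 * (N+1)) with hε'
    have hε'pos : 0 < ε' := by positivity
    -- weak-star neighborhood of F
    set U : Set (WeakDual ℝ X) := ⋂ k ∈ Finset.range N, {G : WeakDual ℝ X | |G (y k) - F (y k)| < ε'}
      with hU
    have hUopen : IsOpen U := by
      refine isOpen_biInter_finset fun k _ => ?_
      have hcont : Continuous fun G : WeakDual ℝ X => |G (y k) - F (y k)| :=
        ((WeakDual.eval_continuous (y k)).sub continuous_const).abs
      exact isOpen_lt hcont continuous_const
    have hFU : F ∈ U := by
      simp only [hU, Set.mem_iInter, Set.mem_setOf_eq]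
      intro k _
      simpa using hε'pos
    obtain ⟨n, hnU, hnbad⟩ :=
      ((mapClusterPt_iff_frequently.mp hFcl U (hUopen.mem_nhds hFU)).and_eventually
        (Filter.le_principal_iff.mp inf_le_right : ∀ᶠ n in l, n ∈ bad)).exists
    refine hnbad ⟨F₀, hFK, hFM, ?_⟩
    -- estimate d (H' n - F₀)
    set T : X →L[ℝ] ℝ := H' n - F₀ with hT
    have hTnorm : ‖T‖ ≤ 2*K + 1 := by
      have := norm_sub_le (H' n) F₀
      have h1 := hH'K n
      nlinarith
    have hdecomp := Summable.sum_add_tsum_compl (s := Finset.range N) (hsumm T)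
    have hhead : ∑ k ∈ Finset.range N, w k * |T (y k)| ≤ ε / 2 := by
      have hle : ∀ k ∈ Finset.range N, w k * |T (y k)| ≤ ε' := by
        intro k hk
        have hkN : k < N := Finset.mem_range.mp hk
        have hUn : |v n (y k) - F (y k)| < ε' := by
          have := hnU
          simp only [hU, Set.mem_iInter, Set.mem_setOf_eq] at this
          exact this k (Finset.mem_range.mpr hkN)
        have hvn : v n (y k) = H' n (y k) := rfl
        have hF0 : F (y k) = F₀ (y k) := rfl
        have hTk : |T (y k)| < ε' := by
          rw [hT]
          simpa [ContinuousLinearMap.sub_apply, hvn, hF0] using hUn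
        calc w k * |T (y k)| ≤ 1 * |T (y k)| :=
              mul_le_mul_of_nonneg_right (hwone k) (abs_nonneg _)
          _ = |T (y k)| := one_mul _
          _ ≤ ε' := hTk.le
      calc ∑ k ∈ Finset.range N, w k * |T (y k)| ≤ ∑ _k ∈ Finset.range N, ε' :=
            Finset.sum_le_sum hle
        _ = N * ε' := by simp [mul_comm]
        _ ≤ ε / 2 := by
            rw [hε', ← mul_div_assoc]
            rw [div_le_div_iff₀ (by positivity) (by norm_num : (0:ℝ) < 2)]
            nlinarith [hε.le]
    have htailb : ∑' (k : ↑(↑(Finset.range N) : Set ℕ)ᶜ), w k * |T (y (k:ℕ))| < ε / 2 := by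
      have hsub1 : Summable fun k : ↑(↑(Finset.range N) : Set ℕ)ᶜ => w k * |T (y (k:ℕ))| :=
        (hsumm T).subtype _
      have hsub2 : Summable fun k : ↑(↑(Finset.range N) : Set ℕ)ᶜ => (2*K+1) * (1/2 : ℝ)^(k:ℕ) :=
        ((summable_geometric_two).mul_left (2*K+1)).subtype _
      have hcmp : ∑' (k : ↑(↑(Finset.range N) : Set ℕ)ᶜ), w k * |T (y (k:ℕ))| ≤
          ∑' (k : ↑(↑(Finset.range N) : Set ℕ)ᶜ), (2*K+1) * (1/2 : ℝ)^(k:ℕ) := by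
        refine Summable.tsum_le_tsum (fun k => ?_) hsub1 hsub2
        calc w (k:ℕ) * |T (y (k:ℕ))| ≤ (1/2 : ℝ)^(k:ℕ) * ‖T‖ := hterm T k
          _ ≤ (1/2 : ℝ)^(k:ℕ) * (2*K+1) := mul_le_mul_of_nonneg_left hTnorm (by positivity)
          _ = (2*K+1) * (1/2 : ℝ)^(k:ℕ) := by ring
      have hgeo : ∑' (k : ↑(↑(Finset.range N) : Set ℕ)ᶜ), (2*K+1) * (1/2 : ℝ)^(k:ℕ)
          = (2*K+1) * ∑' (k : ↑(↑(Finset.range N) : Set ℕ)ᶜ), (1/2 : ℝ)^(k:ℕ) := tsum_mul_left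
      have hNval : ∑' (k : ↑(↑(Finset.range N) : Set ℕ)ᶜ), (1/2 : ℝ)^(k:ℕ) < ε / (2 * (2*K+1)) := by
        have : ∑' (k : { x : ℕ // x ∉ Finset.range N }), (1/2 : ℝ)^(k:ℕ) < ε / (2 * (2*K+1)) := hN
        exact this
      calc ∑' (k : ↑(↑(Finset.range N) : Set ℕ)ᶜ), w k * |T (y (k:ℕ))|
          ≤ (2*K+1) * ∑' (k : ↑(↑(Finset.range N) : Set ℕ)ᶜ), (1/2 : ℝ)^(k:ℕ) := by
            rw [← hgeo]; exact hcmp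
        _ < (2*K+1) * (ε / (2 * (2*K+1))) :=
            mul_lt_mul_of_pos_left hNval (by positivity)
        _ = ε / 2 := by field_simp
    calc d T = ∑ k ∈ Finset.range N, w k * |T (y k)| +
          ∑' (k : ↑(↑(Finset.range N) : Set ℕ)ᶜ), w k * |T (y (k:ℕ))| := hdecomp.symm
      _ < ε := by linarith
  -- select corrections G n
  set S : ℕ → Set ℝ := fun n =>
    {r | ∃ G : X →L[ℝ] ℝ, ‖G‖ ≤ K ∧ (∀ m : M, G m = 0) ∧ r = d (H' n - G)} with hS
  have hSne : ∀ n, (S n).Nonempty := fun n =>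
    ⟨d (H' n - 0), 0, by simpa using hK0, fun m => rfl, rfl⟩
  have hSbdd : ∀ n, BddBelow (S n) := fun n =>
    ⟨0, fun r hr => by obtain ⟨G, -, -, rfl⟩ := hr; exact hd0 _⟩
  have hsel : ∀ n, ∃ G : X →L[ℝ] ℝ, ‖G‖ ≤ K ∧ (∀ m : M, G m = 0) ∧
      d (H' n - G) < sInf (S n) + 1/(n+1) := by
    intro n
    obtain ⟨r, hrS, hlt⟩ := Real.lt_sInf_add_pos (hSne n)
      (by positivity : (0:ℝ) < 1/(n+1))
    obtain ⟨G, h1, h2, rfl⟩ := hrS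
    exact ⟨G, h1, h2, hlt⟩
  choose G hGK hGM hGd using hsel
  set H : ℕ → X →L[ℝ] ℝ := fun n => H' n - G n with hH
  -- d (H n) → 0
  have hdev : ∀ ε > (0:ℝ), ∀ᶠ n in atTop, d (H n) < ε := by
    intro ε hε
    have h1 : ∀ᶠ n in atTop, sInf (S n) < ε/2 := by
      filter_upwards [claim (ε/2) (by linarith)] with n hn
      obtain ⟨G', hG1, hG2, hG3⟩ := hn
      exact lt_of_le_of_lt (csInf_le (hSbdd n) ⟨G', hG1, hG2, rfl⟩) hG3
    have h2 : ∀ᶠ n : ℕ in atTop, (1:ℝ)/(n+1) < ε/2 := by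
      have ht : Filter.Tendsto (fun n : ℕ => (1:ℝ)/((n:ℝ)+1)) atTop (𝓝 0) :=
        tendsto_one_div_add_atTop_nhds_zero_nat
      exact (tendsto_order.1 ht).2 _ (by linarith)
    filter_upwards [h1, h2] with n hn1 hn2
    calc d (H n) < sInf (S n) + 1/(n+1) := hGd n
      _ < ε := by linarith
  -- coordinatewise convergence
  have hcoord : ∀ k, Filter.Tendsto (fun n => H n (y k)) atTop (𝓝 0) := by
    intro k
    rw [NormedAddCommGroup.tendsto_nhds_zero]
    intro ε hε
    filter_upwards [hdev (w k * ε) (by positivity)] with n hn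
    have h1 := hdterm (H n) k
    rw [Real.norm_eq_abs]
    nlinarith [hwpos k, abs_nonneg (H n (y k))]
  -- extension property
  have hHext : ∀ n (m : M), H n m = h n m := by
    intro n m
    simp only [hH, ContinuousLinearMap.sub_apply]
    rw [hGM n m, hH'ext n m, sub_zero]
  have hHK : ∀ n, ‖H n‖ ≤ 2*K := fun n =>
    le_trans (norm_sub_le _ _) (by linarith [hH'K n, hGK n])
  refine ⟨H, hHext, ?_⟩
  intro x
  rw [NormedAddCommGroup.tendsto_nhds_zero]
  intro ε hε
  set η : ℝ := ε / (6 * (2*K+1)) with hη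
  have hηpos : 0 < η := by positivity
  obtain ⟨k, hk⟩ := hu.exists_dist_lt (Submodule.Quotient.mk x : X ⧸ M) hηpos
  have hqnorm : ‖(Submodule.Quotient.mk (x - y k) : X ⧸ M)‖ < η := by
    have : (Submodule.Quotient.mk (x - y k) : X ⧸ M) =
        (Submodule.Quotient.mk x : X ⧸ M) - u k := by
      rw [← hy k, Submodule.Quotient.mk_sub]
    rw [this, ← dist_eq_norm]
    exact hk
  obtain ⟨z, hz1, hz2⟩ := Submodule.Quotient.norm_mk_lt
    (Submodule.Quotient.mk (x - y k) : X ⧸ M) hηpos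
  have hz2' : ‖z‖ < 2 * η := by linarith
  have hmem : (x - y k) - z ∈ M := (Submodule.Quotient.eq M).mp hz1.symm
  set m : M := ⟨(x - y k) - z, hmem⟩ with hm
  have hxeq : x = y k + z + (m : X) := by
    simp only [hm]
    abel
  have hmtend : Filter.Tendsto (fun n => H n (m : X)) atTop (𝓝 0) := by
    have : (fun n => H n (m : X)) = fun n => h n m := by
      funext n; exact hHext n m
    rw [this]
    exact hnull m
  filter_upwards [(NormedAddCommGroup.tendsto_nhds_zero.mp (hcoord k)) (ε/3) (by linarith),
    (NormedAddCommGroup.tendsto_nhds_zero.mp hmtend) (ε/3) (by linarith)] with n hn1 hn2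
  have hsplit : H n x = H n (y k) + H n z + H n (m : X) := by
    rw [hxeq]; simp [map_add]
  have hz3 : ‖H n z‖ ≤ 2*K * ‖z‖ :=
    ((H n).le_opNorm z).trans (mul_le_mul_of_nonneg_right (hHK n) (norm_nonneg z))
  have hz4 : 2*K * ‖z‖ < ε/3 := by
    have h1 : 2*K * ‖z‖ ≤ 2*K * (2*η) := mul_le_mul_of_nonneg_left (by linarith) (by linarith)
    have h2 : 2*K * (2*η) < ε/3 := by
      have hkey : η * (6*(2*K+1)) = ε := by rw [hη]; field_simp
      nlinarith [mul_nonneg hK0 hηpos.le, hηpos]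
    linarith
  calc ‖H n x‖ = ‖H n (y k) + H n z + H n (m : X)‖ := by rw [hsplit]
    _ ≤ ‖H n (y k)‖ + ‖H n z‖ + ‖H n (m : X)‖ := norm_add₃_le
    _ < ε/3 + ε/3 + ε/3 := by
        have := hz3.trans_lt hz4
        linarith
    _ = ε := by ring

/-- If `X` is Grothendieck and `M` is a closed subspace with `X/M` separable,
then `M` is Grothendieck. -/
theorem grothendieck_subspace_of_separable_quotient (X : Type*)
    [NormedAddCommGroup X] [NormedSpace ℝ X] [CompleteSpace X]
    (hX : IsGrothendieck X) (M : Submodule ℝ X) (hM : IsClosed (M : Set X))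
    (hsep : TopologicalSpace.SeparableSpace (X ⧸ M)) :
    IsGrothendieck M := by
  intro f g hws
  haveI : CompleteSpace M := hM.completeSpace_coe
  set h : ℕ → M →L[ℝ] ℝ := fun n => f n - g with hh
  have hnull : ∀ m : M, Filter.Tendsto (fun n => h n m) atTop (𝓝 0) := by
    intro m
    have h1 := (hws m).sub (tendsto_const_nhds (x := g m))
    simpa [hh, ContinuousLinearMap.sub_apply] using h1
  have hbdd : ∃ C, ∀ n, ‖h n‖ ≤ C := by
    apply banach_steinhaus
    intro m
    obtain ⟨C, hC⟩ := (hnull m).norm.bddAbove_range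
    exact ⟨C, fun n => hC (Set.mem_range_self n)⟩
  obtain ⟨C, hC⟩ := hbdd
  obtain ⟨H, hHext, hHnull⟩ := sobczyk_seq X M hsep h (max C 0) (le_max_right _ _)
    (fun n => (hC n).trans (le_max_left _ _)) hnull
  set R : (X →L[ℝ] ℝ) →L[ℝ] (M →L[ℝ] ℝ) :=
    (ContinuousLinearMap.compL ℝ M X ℝ).flip M.subtypeL with hR
  have hRH : ∀ n, R (H n) = h n := by
    intro n
    ext m
    simp only [hR, ContinuousLinearMap.flip_apply, ContinuousLinearMap.compL_apply,
      ContinuousLinearMap.comp_apply, Submodule.subtypeL_apply]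
    exact hHext n m
  have hws' : WeakStarConv X H 0 := by
    intro x
    simpa using hHnull x
  intro φ
  have hφ := hX H 0 hws' (φ.comp R)
  have hφ' : Filter.Tendsto (fun n => φ (h n)) atTop (𝓝 0) := by
    have heq : (fun n => (φ.comp R) (H n)) = fun n => φ (h n) := by
      funext n; simp [hRH n]
    rw [heq] at hφ
    simpa using hφ
  have hfin : Filter.Tendsto (fun n => φ (h n) + φ g) atTop (𝓝 (0 + φ g)) :=
    hφ'.add tendsto_const_nhds
  rw [zero_add] at hfin
  have heq2 : (fun n => φ (f n)) = fun n => φ (h n) + φ g := by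
    funext n
    simp [hh, map_sub]
  rw [heq2]
  exact hfin
end
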